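/- arXiv:1607.07354 — 10 statements merged into one kernel-verified Lean document; each statement's English description precedes it below -/
import Mathlib

section
/- (Rolle's Theorem for the conformable proportional derivative) Let a < b with [a,b] ⊆ I. If f : [a,b] → ℝ is continuous on [a,b], differentiable on (a,b), and satisfies f(a) = e_0(a,b)·f(b), then there exists at least one point c ∈ (a,b) such that D^α f(c) = 0. -/
open Set

/-- The conformable proportional derivative `D^α f(t) = κ₁(t) f(t) + κ₀(t) f'(t)`. -/
noncomputable def Dconf (κ₀ κ₁ : ℝ → ℝ) (f : ℝ → ℝ) (t : ℝ) : ℝ :=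
  κ₁ t * f t + κ₀ t * deriv f t

/-- The conformable exponential `e_0(t,s) = exp(-∫_s^t κ₁/κ₀)`. -/
noncomputable def e0 (κ₀ κ₁ : ℝ → ℝ) (t s : ℝ) : ℝ :=
  Real.exp (-(∫ τ in s..t, κ₁ τ / κ₀ τ))

/-- Rolle's theorem for the conformable proportional derivative. -/
theorem conformable_rolle
    (I : Set ℝ) (κ₀ κ₁ : ℝ → ℝ)
    (hκ₀c : ContinuousOn κ₀ I) (hκ₁c : ContinuousOn κ₁ I)
    (hκ₀pos : ∀ t ∈ I, 0 < κ₀ t) (hκ₁nn : ∀ t ∈ I, 0 ≤ κ₁ t)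
    (a b : ℝ) (hab : a < b) (hIab : Icc a b ⊆ I)
    (f : ℝ → ℝ)
    (hfc : ContinuousOn f (Icc a b))
    (hfd : ∀ t ∈ Ioo a b, DifferentiableAt ℝ f t)
    (hfab : f a = e0 κ₀ κ₁ a b * f b) :
    ∃ c ∈ Ioo a b, Dconf κ₀ κ₁ f c = 0 := by
  set F : ℝ → ℝ := fun τ => κ₁ τ / κ₀ τ with hF
  have hFc : ContinuousOn F (Icc a b) := by
    exact ((hκ₁c.mono hIab).div (hκ₀c.mono hIab)
      (fun t ht => (hκ₀pos t (hIab ht)).ne'))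
  have hFint : IntervalIntegrable F MeasureTheory.volume a b := by
    apply ContinuousOn.intervalIntegrable
    rwa [uIcc_of_le hab.le]
  set P : ℝ → ℝ := fun t => ∫ τ in a..t, F τ with hP
  have hPc : ContinuousOn P (Icc a b) := by
    have := intervalIntegral.continuousOn_primitive_interval' hFint
      (by rw [uIcc_of_le hab.le]; exact left_mem_Icc.2 hab.le)
    rwa [uIcc_of_le hab.le] at this
  have hPderiv : ∀ x ∈ Ioo a b, HasDerivAt P (F x) x := by
    intro x hx
    have hcx : ContinuousAt F x :=
      hFc.continuousAt (Icc_mem_nhds hx.1 hx.2)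
    have hint : IntervalIntegrable F MeasureTheory.volume a x := by
      apply hFint.mono_set
      rw [uIcc_of_le hab.le, uIcc_of_le hx.1.le]
      exact Icc_subset_Icc le_rfl hx.2.le
    exact intervalIntegral.integral_hasDerivAt_right hint
      (AEStronglyMeasurable.stronglyMeasurableAtFilter_of_mem
        (hFc.aestronglyMeasurable measurableSet_Icc) (Icc_mem_nhds hx.1 hx.2)) hcx
  set g : ℝ → ℝ := fun t => f t * Real.exp (P t) with hg
  have hgc : ContinuousOn g (Icc a b) := hfc.mul (Real.continuous_exp.comp_continuousOn hPc)
  have hgd : ∀ x ∈ Ioo a b, HasDerivAt g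
      ((deriv f x + f x * F x) * Real.exp (P x)) x := by
    intro x hx
    have h1 : HasDerivAt f (deriv f x) x := (hfd x hx).hasDerivAt
    have h2 : HasDerivAt (fun t => Real.exp (P t)) (Real.exp (P x) * F x) x :=
      (hPderiv x hx).exp
    have : HasDerivAt g (deriv f x * Real.exp (P x) + f x * (Real.exp (P x) * F x)) x :=
      h1.fun_mul h2
    convert this using 1
    ring
  have hgab : g a = g b := by
    have hPa : P a = 0 := intervalIntegral.integral_same
    have hsymm : (∫ τ in b..a, F τ) = -P b := intervalIntegral.integral_symm a b
    simp only [hg, hPa, Real.exp_zero, mul_one]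
    rw [hfab]
    unfold e0
    rw [show (∫ τ in b..a, κ₁ τ / κ₀ τ) = -P b from hsymm]
    simp only [e0, hsymm, neg_neg, hF]
    ring
  obtain ⟨c, hc, hc0⟩ := exists_hasDerivAt_eq_zero hab hgc hgab hgd
  refine ⟨c, hc, ?_⟩
  have hcI : c ∈ I := hIab ⟨hc.1.le, hc.2.le⟩
  have hκ₀c' : κ₀ c ≠ 0 := (hκ₀pos c hcI).ne'
  have hexp : Real.exp (P c) ≠ 0 := Real.exp_ne_zero _
  have h0 : deriv f c + f c * F c = 0 := by
    rcases mul_eq_zero.1 hc0 with h | h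
    · exact h
    · exact absurd h hexp
  have : deriv f c + f c * (κ₁ c / κ₀ c) = 0 := h0
  unfold Dconf
  field_simp at this
  linarith [this]
end

section
/- (Mean Value Theorem for the conformable proportional derivative) Let a < b with [a,b] ⊆ I. If f : [a,b] → ℝ is continuous on [a,b] and differentiable on (a,b), then there exists at least one point c ∈ (a,b) such that D^α f(c) = (e_0(c,b)·f(b) − e_0(c,a)·f(a)) / h₁(b,a). -/
open Set

lemma prim_hasDerivAt {g : ℝ → ℝ} {a b x : ℝ}
    (hg : ContinuousOn g (Icc a b)) (hx : x ∈ Ioo a b) :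
    HasDerivAt (fun u => ∫ s in a..u, g s) (g x) x := by
  have hsub : uIcc a x ⊆ Icc a b := by
    rw [uIcc_of_le hx.1.le]
    exact Icc_subset_Icc le_rfl hx.2.le
  have hInt : IntervalIntegrable g MeasureTheory.volume a x :=
    (hg.mono hsub).intervalIntegrable
  have hcontAt : ∀ y ∈ Ioo a b, ContinuousAt g y := fun y hy =>
    hg.continuousAt (Icc_mem_nhds hy.1 hy.2)
  exact intervalIntegral.integral_hasDerivAt_right hInt
    (ContinuousAt.stronglyMeasurableAtFilter isOpen_Ioo hcontAt x hx)
    (hcontAt x hx)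


/-- Mean Value Theorem for the conformable proportional derivative:
there is `c ∈ (a,b)` with `D^α f(c) = (e₀(c,b) f(b) - e₀(c,a) f(a)) / h₁(b,a)`,
where `h₁(b,a) = ∫_a^b 1 d_α t = ∫_a^b 1/κ₀(t) dt`. -/
theorem conformable_mean_value
    (I : Set ℝ) (κ₀ κ₁ : ℝ → ℝ)
    (hκ₀c : ContinuousOn κ₀ I) (hκ₁c : ContinuousOn κ₁ I)
    (hκ₀pos : ∀ t ∈ I, 0 < κ₀ t) (hκ₁nn : ∀ t ∈ I, 0 ≤ κ₁ t)
    (a b : ℝ) (hab : a < b) (hIab : Icc a b ⊆ I)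
    (f : ℝ → ℝ)
    (hfc : ContinuousOn f (Icc a b))
    (hfd : ∀ t ∈ Ioo a b, DifferentiableAt ℝ f t) :
    ∃ c ∈ Ioo a b,
      Dconf κ₀ κ₁ f c =
        (e0 κ₀ κ₁ c b * f b - e0 κ₀ κ₁ c a * f a) / (∫ t in a..b, 1 / κ₀ t) := by

  -- continuity facts on `Icc a b`
  have hκ₀I : ContinuousOn κ₀ (Icc a b) := hκ₀c.mono hIab
  have hκ₁I : ContinuousOn κ₁ (Icc a b) := hκ₁c.mono hIab
  have hκ₀ne : ∀ t ∈ Icc a b, κ₀ t ≠ 0 := fun t ht => (hκ₀pos t (hIab ht)).ne'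
  set h : ℝ → ℝ := fun t => κ₁ t / κ₀ t with hh
  have hhc : ContinuousOn h (Icc a b) := hκ₁I.div hκ₀I hκ₀ne
  have hinvc : ContinuousOn (fun t => 1 / κ₀ t) (Icc a b) :=
    continuousOn_const.div hκ₀I hκ₀ne
  set E : ℝ → ℝ := fun t => ∫ s in a..t, h s with hE
  set G : ℝ → ℝ := fun t => ∫ s in a..t, 1 / κ₀ s with hG
  -- continuity of the primitives
  have huIcc : uIcc a b = Icc a b := uIcc_of_le hab.le
  have hEc : ContinuousOn E (Icc a b) := by
    have h1 : MeasureTheory.IntegrableOn h (uIcc a b) := by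
      rw [huIcc]; exact hhc.integrableOn_Icc
    have := intervalIntegral.continuousOn_primitive_interval h1
    rwa [huIcc] at this
  have hGc : ContinuousOn G (Icc a b) := by
    have h1 : MeasureTheory.IntegrableOn (fun t => 1 / κ₀ t) (uIcc a b) := by
      rw [huIcc]; exact hinvc.integrableOn_Icc
    have := intervalIntegral.continuousOn_primitive_interval h1
    rwa [huIcc] at this
  -- the Cauchy MVT with F(t) = exp(E t) * f t and G
  set F : ℝ → ℝ := fun t => Real.exp (E t) * f t with hF
  have hFc : ContinuousOn F (Icc a b) := (hEc.rexp).mul hfc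
  have hFd : ∀ x ∈ Ioo a b, HasDerivAt F (Real.exp (E x) * (h x * f x + deriv f x)) x := by
    intro x hx
    have hEx : HasDerivAt E (h x) x := prim_hasDerivAt hhc hx
    have hfx : HasDerivAt f (deriv f x) x := (hfd x hx).hasDerivAt
    have : HasDerivAt (fun y => Real.exp (E y) * f y) _ x := ((hEx.exp).mul hfx)
    convert this using 1
    ring
  have hGd : ∀ x ∈ Ioo a b, HasDerivAt G (1 / κ₀ x) x := fun x hx =>
    prim_hasDerivAt hinvc hx
  obtain ⟨c, hc, hceq⟩ := exists_ratio_hasDerivAt_eq_ratio_slope F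
    (fun x => Real.exp (E x) * (h x * f x + deriv f x)) hab hFc hFd G
    (fun x => 1 / κ₀ x) hGc hGd
  refine ⟨c, hc, ?_⟩
  have hcI : c ∈ Icc a b := Ioo_subset_Icc_self hc
  have hκc : κ₀ c ≠ 0 := hκ₀ne c hcI
  -- positivity of h₁(b,a)
  have hH : 0 < ∫ t in a..b, 1 / κ₀ t := by
    apply intervalIntegral.intervalIntegral_pos_of_pos_on
      (hinvc.intervalIntegrable_of_Icc hab.le)
      (fun x hx => one_div_pos.mpr (hκ₀pos x (hIab (Ioo_subset_Icc_self hx)))) hab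
  -- rewrite e0 in terms of E
  have hEa : E a = 0 := intervalIntegral.integral_same
  have hInt1 : IntervalIntegrable h MeasureTheory.volume a c :=
    (hhc.mono (by rw [uIcc_of_le hc.1.le]; exact Icc_subset_Icc le_rfl hc.2.le)).intervalIntegrable
  have hInt2 : IntervalIntegrable h MeasureTheory.volume a b :=
    hhc.intervalIntegrable_of_Icc hab.le
  have hbc : (∫ s in b..c, h s) = E c - E b := by
    rw [hE]
    simp only
    rw [← intervalIntegral.integral_interval_sub_left hInt1 hInt2]
  have he0b : e0 κ₀ κ₁ c b = Real.exp (E b - E c) := by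
    rw [e0, ← hh]
    rw [hbc]; ring_nf
  have he0a : e0 κ₀ κ₁ c a = Real.exp (-(E c)) := by
    rw [e0, ← hh]
  -- massage the Cauchy MVT identity
  have hGa : G a = 0 := by simp [hG]
  have hFa : F a = f a := by simp [hF, hEa]
  simp only [hG, hF, hh, hE] at hceq hGa hFa
  rw [hGa, hFa, sub_zero] at hceq
  rw [he0b, he0a, Dconf, Real.exp_sub, Real.exp_neg]
  have hHne : (∫ t in a..b, 1 / κ₀ t) ≠ 0 := hH.ne'
  have hexp : Real.exp (E c) ≠ 0 := Real.exp_ne_zero _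
  simp only [hE] at hHne ⊢
  field_simp at hceq ⊢
  nlinarith [hceq, Real.exp_pos (E c), Real.exp_pos (E b), hH]
end

section
/- (Fundamental Theorem of Integral Calculus for the conformable proportional derivative) Let a < b with [a,b] ⊆ I. If f : [a,b] → ℝ is differentiable on [a,b] and f' is integrable on [a,b], then ∫_a^b D^α f(t) · e_0(b,t) d_α t = f(b) − f(a)·e_0(b,a). -/
open Set MeasureTheory

/-- Fundamental Theorem of Integral Calculus for the conformable proportional
derivative: `∫_a^b D^α f(t) e₀(b,t) d_α t = f(b) - f(a) e₀(b,a)`, where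
`d_α t = dt/κ₀(t)`. -/
theorem conformable_ftc
    (I : Set ℝ) (κ₀ κ₁ : ℝ → ℝ)
    (hκ₀c : ContinuousOn κ₀ I) (hκ₁c : ContinuousOn κ₁ I)
    (hκ₀pos : ∀ t ∈ I, 0 < κ₀ t) (hκ₁nn : ∀ t ∈ I, 0 ≤ κ₁ t)
    (a b : ℝ) (hab : a < b) (hIab : Icc a b ⊆ I)
    (f : ℝ → ℝ)
    (hfd : ∀ t ∈ Icc a b, DifferentiableAt ℝ f t)
    (hfint : IntervalIntegrable (deriv f) volume a b) :
    (∫ t in a..b, Dconf κ₀ κ₁ f t * e0 κ₀ κ₁ b t / κ₀ t)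
      = f b - f a * e0 κ₀ κ₁ b a := by
  set q : ℝ → ℝ := fun t => κ₁ t / κ₀ t with hq
  have huIcc : uIcc a b = Icc a b := uIcc_of_le hab.le
  have hne : ∀ t ∈ Icc a b, κ₀ t ≠ 0 := fun t ht => (hκ₀pos t (hIab ht)).ne'
  -- continuity of q on Icc a b
  have hqc : ContinuousOn q (Icc a b) :=
    (hκ₁c.mono hIab).div (hκ₀c.mono hIab) hne
  have hqi : IntervalIntegrable q volume a b :=
    ContinuousOn.intervalIntegrable (huIcc ▸ hqc)
  -- the primitive h t = ∫_b^t q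
  set h : ℝ → ℝ := fun t => ∫ τ in b..t, q τ with hh
  set E : ℝ → ℝ := fun t => Real.exp (h t) with hE
  -- e0 b t = E t
  have he0 : ∀ t, e0 κ₀ κ₁ b t = E t := by
    intro t
    simp only [e0, hE, hh, hq, intervalIntegral.integral_symm t b]
  -- continuity of h on Icc a b
  have hhc : ContinuousOn h (Icc a b) := by
    have := intervalIntegral.continuousOn_primitive_interval' hqi (right_mem_uIcc (a := a) (b := b))
    rw [huIcc] at this
    exact this
  have hEc : ContinuousOn E (Icc a b) := Real.continuous_exp.comp_continuousOn hhc
  have hfc : ContinuousOn f (Icc a b) := fun t ht => (hfd t ht).continuousAt.continuousWithinAt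
  -- F = f * E
  set F : ℝ → ℝ := fun t => f t * E t with hF
  set G : ℝ → ℝ := fun t => deriv f t * E t + f t * (E t * q t) with hG
  have hFc : ContinuousOn F (Icc a b) := hfc.mul hEc
  -- derivative on Ioo
  have hIoo : Ioo a b ⊆ interior I := by
    rw [← interior_Icc]; exact interior_mono hIab
  have hqI : ContinuousOn q (interior I) :=
    ((hκ₁c.mono interior_subset).div (hκ₀c.mono interior_subset)
      (fun t ht => (hκ₀pos t (interior_subset ht)).ne'))
  have hderiv : ∀ x ∈ Ioo a b, HasDerivAt F (G x) x := by
    intro x hx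
    have hxI : x ∈ interior I := hIoo hx
    have hxIcc : x ∈ Icc a b := Ioo_subset_Icc_self hx
    have hqi_bx : IntervalIntegrable q volume b x :=
      hqi.mono_set (uIcc_subset_uIcc right_mem_uIcc (huIcc ▸ hxIcc))
    have hmeas : StronglyMeasurableAtFilter q (nhds x) :=
      hqI.stronglyMeasurableAtFilter isOpen_interior x hxI
    have hcont : ContinuousAt q x := hqI.continuousAt (isOpen_interior.mem_nhds hxI)
    have hh' : HasDerivAt h (q x) x :=
      intervalIntegral.integral_hasDerivAt_right hqi_bx hmeas hcont
    have hE' : HasDerivAt E (E x * q x) x := by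
      simpa [hE] using hh'.exp
    exact ((hfd x hxIcc).hasDerivAt.mul hE')
  -- integrability of G
  have hGint : IntervalIntegrable G volume a b := by
    apply IntervalIntegrable.add
    · exact hfint.mul_continuousOn (by rw [huIcc]; exact hEc)
    · apply ContinuousOn.intervalIntegrable
      rw [huIcc]
      exact hfc.mul (hEc.mul hqc)
  -- FTC
  have hftc : (∫ t in a..b, G t) = F b - F a :=
    intervalIntegral.integral_eq_sub_of_hasDerivAt_of_le hab.le hFc hderiv hGint
  -- the integrand equals G on [a,b]
  have hcongr : (∫ t in a..b, Dconf κ₀ κ₁ f t * e0 κ₀ κ₁ b t / κ₀ t) = ∫ t in a..b, G t := by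
    apply intervalIntegral.integral_congr
    rw [huIcc]
    intro t ht
    have h0 := hne t ht
    simp only [Dconf, he0, hG, hE, hq]
    field_simp
    ring
  rw [hcongr, hftc]
  have hb : h b = 0 := by simp [hh]
  have hEb : E b = 1 := by simp [hE, hb]
  rw [he0 a, hF]
  simp [hEb]
end

section
/- (Existence and uniqueness for the self-adjoint initial value problem) Let p, q, h : I → ℝ be continuous with p(t) ≠ 0 for all t ∈ I, let t₀ ∈ I, and let x₀, x₁ ∈ ℝ. Then there exists a unique function x on I, with D^α x and D^α[p·D^α x] continuous on I, such that D^α[p·D^α x](t) + q(t)·x(t) = h(t) for all t ∈ I, x(t₀) = x₀, and D^α x(t₀) = x₁. -/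
open Set

/-- `x` is a solution of the nonhomogeneous self-adjoint equation
`D^α[p D^α x] + q x = h` on `I`: `x` is differentiable on `I`, `D^α x` and
`D^α[p D^α x]` exist and are continuous on `I`, and the equation holds on `I`. -/
def IsSolutionSA (κ₀ κ₁ p q h : ℝ → ℝ) (I : Set ℝ) (x : ℝ → ℝ) : Prop :=
  (∀ t ∈ I, DifferentiableAt ℝ x t) ∧
  ContinuousOn (Dconf κ₀ κ₁ x) I ∧
  (∀ t ∈ I, DifferentiableAt ℝ (fun s => p s * Dconf κ₀ κ₁ x s) t) ∧
  ContinuousOn (Dconf κ₀ κ₁ (fun s => p s * Dconf κ₀ κ₁ x s)) I ∧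
  ∀ t ∈ I, Dconf κ₀ κ₁ (fun s => p s * Dconf κ₀ κ₁ x s) t + q t * x t = h t

open Real NNReal


variable {E : Type*} [NormedAddCommGroup E] [NormedSpace ℝ E]

/-- gronwallBound is monotone in the time variable for nonneg data. -/
lemma gronwallBound_mono' {δ K ε : ℝ} (hδ : 0 ≤ δ) (hK : 0 ≤ K) (hε : 0 ≤ ε)
    {x y : ℝ} (hxy : x ≤ y) (hx : 0 ≤ x) :
    gronwallBound δ K ε x ≤ gronwallBound δ K ε y := by
  by_cases h : K = 0
  · subst h
    simp only [gronwallBound_K0]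
    nlinarith
  · have hK' : 0 < K := lt_of_le_of_ne hK (Ne.symm h)
    rw [gronwallBound_of_K_ne_0 h]
    have h1 : Real.exp (K * x) ≤ Real.exp (K * y) :=
      Real.exp_le_exp.2 (by nlinarith)
    have h2 : (0:ℝ) ≤ ε / K := div_nonneg hε hK
    nlinarith [Real.exp_pos (K * x)]

/-- Glue two solutions of an ODE at a common point. -/
lemma ode_glue {v : ℝ → E → E} {f g : ℝ → E} {a c b : ℝ}
    (hac : a ≤ c) (hcb : c ≤ b)
    (hf : ∀ t ∈ Icc a c, HasDerivWithinAt f (v t (f t)) (Icc a c) t)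
    (hg : ∀ t ∈ Icc c b, HasDerivWithinAt g (v t (g t)) (Icc c b) t)
    (hfg : f c = g c) :
    ∀ t ∈ Icc a b, HasDerivWithinAt (fun s => if s ≤ c then f s else g s)
      (v t (if t ≤ c then f t else g t)) (Icc a b) t := by
  set F : ℝ → E := fun s => if s ≤ c then f s else g s with hF
  have hFf : ∀ s ∈ Icc a c, F s = f s := fun s hs => if_pos hs.2
  have hFg : ∀ s ∈ Icc c b, F s = g s := by
    intro s hs
    by_cases hsc : s ≤ c
    · have : s = c := le_antisymm hsc hs.1
      simp [hF, this, hfg]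
    · simp [hF, hsc]
  have hIcc : Icc a c ∪ Icc c b = Icc a b := Icc_union_Icc_eq_Icc hac hcb
  intro t ht
  rcases lt_trichotomy t c with htc | rfl | htc
  · -- t < c
    have htm : t ∈ Icc a c := ⟨ht.1, htc.le⟩
    have h1 : HasDerivWithinAt F (v t (f t)) (Icc a c) t :=
      (hf t htm).congr hFf (hFf t htm)
    have h2 : Icc a c ∈ nhdsWithin t (Icc a b) := by
      apply mem_nhdsWithin.2
      exact ⟨Iio c, isOpen_Iio, htc, fun s hs => ⟨hs.2.1, le_of_lt hs.1⟩⟩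
    have := h1.mono_of_mem_nhdsWithin h2
    simpa [hF, htc.le] using this
  · -- t = c
    have h1 : HasDerivWithinAt F (v t (f t)) (Icc a t) t :=
      (hf t ⟨hac, le_rfl⟩).congr hFf (hFf t ⟨hac, le_rfl⟩)
    have h2 : HasDerivWithinAt F (v t (f t)) (Icc t b) t := by
      have := (hg t ⟨le_rfl, hcb⟩).congr hFg (hFg t ⟨le_rfl, hcb⟩)
      rwa [← hfg] at this
    have := (h1.union h2).mono (by rw [Icc_union_Icc_eq_Icc hac hcb])
    simpa [hF] using this
  · -- t > c
    have htm : t ∈ Icc c b := ⟨htc.le, ht.2⟩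
    have h1 : HasDerivWithinAt F (v t (g t)) (Icc c b) t :=
      (hg t htm).congr hFg (hFg t htm)
    have h2 : Icc c b ∈ nhdsWithin t (Icc a b) := by
      apply mem_nhdsWithin.2
      exact ⟨Ioi c, isOpen_Ioi, htc, fun s hs => ⟨le_of_lt hs.1, hs.2.2⟩⟩
    have := h1.mono_of_mem_nhdsWithin h2
    simpa [hF, not_le.2 htc] using this

lemma hasDerivWithinAt_singleton' (f : ℝ → E) (x : ℝ) (e : E) :
    HasDerivWithinAt f e {x} x := by
  rw [hasDerivWithinAt_iff_hasFDerivWithinAt]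
  simp [HasFDerivWithinAt, nhdsWithin_singleton, hasFDerivAtFilter_iff_isLittleO,
    Asymptotics.isLittleO_pure]

/-- Existence of a solution on a compact interval starting at the left endpoint,
for a vector field which is uniformly Lipschitz in the space variable. -/
lemma ode_exists_right [CompleteSpace E] {v : ℝ → E → E} {a b : ℝ} (hab : a ≤ b) {K : ℝ≥0}
    (hlip : ∀ t ∈ Icc a b, LipschitzWith K (v t))
    (hcont : ∀ x : E, ContinuousOn (fun t => v t x) (Icc a b))
    (x₀ : E) :
    ∃ f : ℝ → E, f a = x₀ ∧ ∀ t ∈ Icc a b, HasDerivWithinAt f (v t (f t)) (Icc a b) t := by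
  -- bound of `v · 0` on the compact interval
  obtain ⟨C₀', hC₀'⟩ := isCompact_Icc.exists_bound_of_continuousOn (hcont 0)
  set C₀ : ℝ := max C₀' 0 with hC₀def
  have hC₀ : 0 ≤ C₀ := le_max_right _ _
  have hvnorm : ∀ t ∈ Icc a b, ∀ x : E, ‖v t x‖ ≤ K * ‖x‖ + C₀ := by
    intro t ht x
    have h1 : ‖v t x - v t 0‖ ≤ K * ‖x‖ := by
      have := (hlip t ht).dist_le_mul x 0
      simpa [dist_eq_norm] using this
    calc ‖v t x‖ ≤ ‖v t x - v t 0‖ + ‖v t 0‖ := by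
          have := norm_add_le (v t x - v t 0) (v t 0); simpa using this
      _ ≤ K * ‖x‖ + C₀ := add_le_add h1 ((hC₀' t ht).trans (le_max_left _ _))
  -- a priori bound
  set M : ℝ := gronwallBound ‖x₀‖ K C₀ (b - a) with hMdef
  have hM0 : ‖x₀‖ ≤ M := by
    rw [hMdef]
    have := gronwallBound_mono' (norm_nonneg x₀) K.coe_nonneg hC₀
      (sub_nonneg.2 hab) le_rfl (x := 0)
    simpa [gronwallBound_x0] using this
  have hMnn : 0 ≤ M := le_trans (norm_nonneg _) hM0
  have apriori : ∀ s ∈ Icc a b, ∀ f : ℝ → E, f a = x₀ →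
      (∀ t ∈ Icc a s, HasDerivWithinAt f (v t (f t)) (Icc a s) t) →
      ∀ t ∈ Icc a s, ‖f t‖ ≤ M := by
    intro s hs f hfa hf t ht
    have hconf : ContinuousOn f (Icc a s) := fun u hu => (hf u hu).continuousWithinAt
    have hsub : Icc a s ⊆ Icc a b := Icc_subset_Icc le_rfl hs.2
    have key := norm_le_gronwallBound_of_norm_deriv_right_le (f' := fun t => v t (f t))
      (δ := ‖x₀‖) (K := K) (ε := C₀) hconf ?_ (by rw [hfa]) ?_ t ht
    · refine key.trans (gronwallBound_mono' (norm_nonneg x₀) K.coe_nonneg hC₀ ?_ ?_)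
      · linarith [ht.2, hs.2]
      · linarith [ht.1]
    · intro u hu
      refine (hf u ⟨hu.1, hu.2.le⟩).mono_of_mem_nhdsWithin ?_
      exact mem_nhdsWithin.2 ⟨Iio s, isOpen_Iio, hu.2,
        fun w hw => ⟨hu.1.trans hw.2, hw.1.le⟩⟩
    · intro u hu
      exact hvnorm u (hsub ⟨hu.1, hu.2.le⟩) (f u)
  -- uniform step size
  set C : ℝ := K * (M + 1) + C₀ + 1 with hCdef
  have hCpos : 0 < C := by positivity
  set ε : ℝ := 1 / C with hεdef
  have hεpos : 0 < ε := by positivity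
  -- one step of Picard-Lindelöf
  have step : ∀ s ∈ Icc a b, ∀ z : E, ‖z‖ ≤ M →
      ∃ g : ℝ → E, g s = z ∧ ∀ t ∈ Icc s (min b (s + ε)),
        HasDerivWithinAt g (v t (g t)) (Icc s (min b (s + ε))) t := by
    intro s hs z hz
    have hsm : s ≤ min b (s + ε) := le_min hs.2 (le_add_of_nonneg_right hεpos.le)
    have hsub : Icc s (min b (s + ε)) ⊆ Icc a b :=
      Icc_subset_Icc hs.1 (min_le_left _ _)
    have hpl : IsPicardLindelof v (tmin := s) (tmax := min b (s + ε)) ⟨s, le_rfl, hsm⟩ z 1 0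
        ⟨C, hCpos.le⟩ K :=
      { lipschitzOnWith := fun t ht => ((hlip t (hsub ht)).lipschitzOnWith)
        continuousOn := fun x _ => (hcont x).mono hsub
        norm_le := by
          intro t ht x hx
          have hxn : ‖x‖ ≤ M + 1 := by
            have : ‖x - z‖ ≤ 1 := by simpa using mem_closedBall_iff_norm.1 hx
            calc ‖x‖ ≤ ‖x - z‖ + ‖z‖ := by
                  have := norm_add_le (x - z) z; simpa using this
              _ ≤ M + 1 := by linarith
          calc ‖v t x‖ ≤ K * ‖x‖ + C₀ := hvnorm t (hsub ht) x
            _ ≤ K * (M + 1) + C₀ := by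
                have := mul_le_mul_of_nonneg_left hxn K.coe_nonneg
                linarith
            _ ≤ C := by rw [hCdef]; linarith
        mul_max_le := by
          show C * max (min b (s + ε) - s) (s - s) ≤ ((1:ℝ≥0):ℝ) - ((0:ℝ≥0):ℝ)
          rw [NNReal.coe_one, NNReal.coe_zero, sub_zero]
          have h1 : max (min b (s + ε) - s) (s - s) ≤ ε := by
            apply max_le _ (by simpa using hεpos.le)
            have : min b (s + ε) ≤ s + ε := min_le_right _ _
            linarith
          calc C * max (min b (s + ε) - s) (s - s) ≤ C * ε :=
                mul_le_mul_of_nonneg_left h1 hCpos.le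
            _ = 1 := by rw [hεdef]; field_simp }
    exact hpl.exists_eq_forall_mem_Icc_hasDerivWithinAt₀
  -- the set of times up to which we can solve
  set P : ℝ → Prop := fun s => ∃ f : ℝ → E, f a = x₀ ∧
    ∀ t ∈ Icc a s, HasDerivWithinAt f (v t (f t)) (Icc a s) t with hPdef
  set S : Set ℝ := {s | s ∈ Icc a b ∧ P s} with hSdef
  have haS : a ∈ S := by
    refine ⟨⟨le_rfl, hab⟩, fun _ => x₀, rfl, ?_⟩
    intro t ht
    have : t = a := le_antisymm ht.2 ht.1
    subst this
    rw [Icc_self]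
    exact hasDerivWithinAt_singleton' _ _ _
  have hSbdd : BddAbove S := ⟨b, fun s hs => hs.1.2⟩
  have hSne : S.Nonempty := ⟨a, haS⟩
  -- extension step
  have ext : ∀ s ∈ S, min b (s + ε) ∈ S := by
    rintro s ⟨hs, f, hfa, hf⟩
    have hzM : ‖f s‖ ≤ M := apriori s hs f hfa hf s ⟨hs.1, le_rfl⟩
    obtain ⟨g, hgs, hg⟩ := step s hs (f s) hzM
    have hsm : s ≤ min b (s + ε) := le_min hs.2 (le_add_of_nonneg_right hεpos.le)
    refine ⟨⟨hs.1.trans hsm, min_le_left _ _⟩, fun t => if t ≤ s then f t else g t, ?_, ?_⟩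
    · simp [hs.1, hfa]
    · intro t ht
      exact ode_glue hs.1 hsm hf hg hgs.symm t ht
  -- conclude via sSup
  have hbS : b ∈ S := by
    set c : ℝ := sSup S with hcdef
    have hcb : c ≤ b := csSup_le hSne fun s hs => hs.1.2
    obtain ⟨s, hsS, hslt⟩ := exists_lt_of_lt_csSup hSne
      (show c - ε / 2 < c by linarith)
    have hm := ext s hsS
    by_cases hbs : b ≤ s + ε
    · rwa [min_eq_left hbs] at hm
    · exfalso
      push_neg at hbs
      rw [min_eq_right hbs.le] at hm
      have : s + ε ≤ c := le_csSup hSbdd hm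
      linarith
  obtain ⟨_, f, hfa, hf⟩ := hbS
  exact ⟨f, hfa, hf⟩

/-- Existence of a solution on a compact interval with initial time anywhere inside. -/
lemma ode_exists_Icc [CompleteSpace E] {v : ℝ → E → E} {a b t₀ : ℝ}
    (ha : a ≤ t₀) (hb : t₀ ≤ b) {K : ℝ≥0}
    (hlip : ∀ t ∈ Icc a b, LipschitzWith K (v t))
    (hcont : ∀ x : E, ContinuousOn (fun t => v t x) (Icc a b))
    (x₀ : E) :
    ∃ f : ℝ → E, f t₀ = x₀ ∧ ∀ t ∈ Icc a b, HasDerivWithinAt f (v t (f t)) (Icc a b) t := by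
  have hsubR : Icc t₀ b ⊆ Icc a b := Icc_subset_Icc ha le_rfl
  obtain ⟨fR, hfR0, hfR⟩ := ode_exists_right hb (fun t ht => hlip t (hsubR ht))
    (fun x => (hcont x).mono hsubR) x₀
  -- left part by time reversal
  set σ : ℝ → ℝ := fun t => 2 * t₀ - t with hσdef
  have hσmem : ∀ t ∈ Icc t₀ (2 * t₀ - a), σ t ∈ Icc a t₀ := by
    intro t ht
    rw [mem_Icc] at ht
    rw [hσdef]
    simp only [mem_Icc]
    constructor <;> linarith
  have hsubL : Icc a t₀ ⊆ Icc a b := Icc_subset_Icc le_rfl hb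
  set w : ℝ → E → E := fun t u => -(v (σ t) u) with hwdef
  have hwlip : ∀ t ∈ Icc t₀ (2 * t₀ - a), LipschitzWith K (w t) := by
    intro t ht
    have := hlip (σ t) (hsubL (hσmem t ht))
    exact LipschitzWith.of_dist_le_mul fun x y => by
      simpa [w, dist_neg_neg] using this.dist_le_mul x y
  have hσcont : ContinuousOn σ (Icc t₀ (2 * t₀ - a)) :=
    (continuous_const.sub continuous_id).continuousOn
  have hwcont : ∀ x : E, ContinuousOn (fun t => w t x) (Icc t₀ (2 * t₀ - a)) := by
    intro x
    exact (((hcont x).mono hsubL).comp hσcont hσmem).neg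
  obtain ⟨g, hg0, hg⟩ := ode_exists_right (by linarith : t₀ ≤ 2 * t₀ - a) hwlip hwcont x₀
  set fL : ℝ → E := fun t => g (σ t) with hfLdef
  have hfL0 : fL t₀ = x₀ := by simp [fL, σ, hg0, two_mul]
  have hfL : ∀ t ∈ Icc a t₀, HasDerivWithinAt fL (v t (fL t)) (Icc a t₀) t := by
    intro t ht
    have hσt : σ t ∈ Icc t₀ (2 * t₀ - a) := by
      rw [hσdef]; simp only [mem_Icc]
      rw [mem_Icc] at ht
      constructor <;> linarith
    have hσmem' : MapsTo σ (Icc a t₀) (Icc t₀ (2 * t₀ - a)) := by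
      intro u hu
      rw [mem_Icc] at hu
      rw [hσdef]; simp only [mem_Icc]
      constructor <;> linarith
    have hσderiv : HasDerivWithinAt σ (-1) (Icc a t₀) t := by
      rw [hσdef]
      simpa using ((hasDerivWithinAt_id t (Icc a t₀)).const_sub (2 * t₀))
    have hcomp := HasDerivWithinAt.scomp t (hg (σ t) hσt) hσderiv hσmem'
    have hval : ((-1 : ℝ) • w (σ t) (g (σ t))) = v t (fL t) := by
      have hσσ : σ (σ t) = t := by rw [hσdef]; simp
      rw [hwdef]
      simp only [hσσ]
      simp [fL]
    rw [hval] at hcomp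
    exact hcomp
  -- glue
  refine ⟨fun s => if s ≤ t₀ then fL s else fR s, by simp [hfL0], ?_⟩
  intro t ht
  exact ode_glue ha hb hfL hfR (by rw [hfL0, hfR0]) t ht

/-- In an open order-connected set, two points are contained in a compact interval
inside the set whose interior contains both. -/
lemma interval_pick {I : Set ℝ} (hIopen : IsOpen I) (hIconn : I.OrdConnected)
    {s t : ℝ} (hs : s ∈ I) (ht : t ∈ I) :
    ∃ a b : ℝ, a < s ∧ a < t ∧ s < b ∧ t < b ∧ Icc a b ⊆ I := by
  have single : ∀ r ∈ I, ∃ δ : ℝ, 0 < δ ∧ Icc (r - δ) (r + δ) ⊆ I := by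
    intro r hr
    obtain ⟨ε, hε, hball⟩ := Metric.isOpen_iff.1 hIopen r hr
    refine ⟨ε / 2, by linarith, fun u hu => hball ?_⟩
    rw [Metric.mem_ball, Real.dist_eq, abs_sub_lt_iff]
    constructor <;> [linarith [hu.2]; linarith [hu.1]]
  set m : ℝ := min s t with hm
  set M : ℝ := max s t with hM
  have hmI : m ∈ I := by
    rcases min_choice s t with h | h <;> rw [hm, h] <;> assumption
  have hMI : M ∈ I := by
    rcases max_choice s t with h | h <;> rw [hM, h] <;> assumption
  obtain ⟨δ₁, hδ₁, hsub₁⟩ := single m hmI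
  obtain ⟨δ₂, hδ₂, hsub₂⟩ := single M hMI
  refine ⟨m - δ₁, M + δ₂, ?_, ?_, ?_, ?_, ?_⟩
  · have : m ≤ s := min_le_left _ _
    linarith
  · have : m ≤ t := min_le_right _ _
    linarith
  · have : s ≤ M := le_max_left _ _
    linarith
  · have : t ≤ M := le_max_right _ _
    linarith
  · intro u hu
    rcases le_or_gt u m with h1 | h1
    · exact hsub₁ ⟨hu.1, by linarith⟩
    rcases le_or_gt u M with h2 | h2
    · exact hIconn.out hmI hMI ⟨h1.le, h2⟩
    · exact hsub₂ ⟨by linarith, hu.2⟩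

/-- Uniqueness of ODE solutions on an open interval around the initial time. -/
lemma ode_uniq_Ioo {v : ℝ → E → E} {a b t₀ : ℝ} {K : ℝ≥0}
    (hlip : ∀ t ∈ Icc a b, LipschitzWith K (v t))
    {f g : ℝ → E} (ht₀ : t₀ ∈ Ioo a b)
    (hf : ∀ t ∈ Ioo a b, HasDerivAt f (v t (f t)) t)
    (hg : ∀ t ∈ Ioo a b, HasDerivAt g (v t (g t)) t)
    (heq : f t₀ = g t₀) : EqOn f g (Ioo a b) := by
  have hab : a ≤ b := le_of_lt (ht₀.1.trans ht₀.2)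
  set v' : ℝ → E → E := fun t => v (projIcc a b hab t) with hv'def
  have hv' : ∀ t, LipschitzOnWith K (v' t) ((fun _ => (univ : Set E)) t) := fun t =>
    (hlip _ (projIcc a b hab t).2).lipschitzOnWith
  have hproj : ∀ t ∈ Ioo a b, ∀ y : E, v' t y = v t y := by
    intro t ht y
    rw [hv'def]
    simp [projIcc_of_mem hab (Ioo_subset_Icc_self ht)]
  refine ODE_solution_unique_of_mem_Ioo (fun t _ => hv' t) ht₀ (fun t ht => ⟨?_, trivial⟩)
    (fun t ht => ⟨?_, trivial⟩) heq
  · rw [hproj t ht]; exact hf t ht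
  · rw [hproj t ht]; exact hg t ht

/-- Global uniqueness on an open order-connected set. -/
lemma ode_uniq_global {I : Set ℝ} (hIopen : IsOpen I) (hIconn : I.OrdConnected)
    {v : ℝ → E → E}
    (hl : ∀ a b : ℝ, Icc a b ⊆ I → ∃ K : ℝ≥0, ∀ t ∈ Icc a b, LipschitzWith K (v t))
    {t₀ : ℝ} (ht₀ : t₀ ∈ I) {f g : ℝ → E}
    (hf : ∀ t ∈ I, HasDerivAt f (v t (f t)) t)
    (hg : ∀ t ∈ I, HasDerivAt g (v t (g t)) t)
    (heq : f t₀ = g t₀) : EqOn f g I := by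
  intro t ht
  obtain ⟨a, b, hat, hat₀, htb, ht₀b, hsub⟩ := interval_pick hIopen hIconn ht ht₀
  obtain ⟨K, hK⟩ := hl a b hsub
  have hIoo : Ioo a b ⊆ I := fun u hu => hsub (Ioo_subset_Icc_self hu)
  exact ode_uniq_Ioo hK ⟨hat₀, ht₀b⟩ (fun u hu => hf u (hIoo hu))
    (fun u hu => hg u (hIoo hu)) heq ⟨hat, htb⟩

/-- Global existence on an open order-connected set. -/
lemma ode_exists_global [CompleteSpace E] {I : Set ℝ} (hIopen : IsOpen I)
    (hIconn : I.OrdConnected) {v : ℝ → E → E}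
    (hl : ∀ a b : ℝ, Icc a b ⊆ I → ∃ K : ℝ≥0, ∀ t ∈ Icc a b, LipschitzWith K (v t))
    (hc : ∀ x : E, ContinuousOn (fun t => v t x) I)
    {t₀ : ℝ} (ht₀ : t₀ ∈ I) (x₀ : E) :
    ∃ f : ℝ → E, f t₀ = x₀ ∧ ∀ t ∈ I, HasDerivAt f (v t (f t)) t := by
  classical
  have key : ∀ t, t ∈ I → ∃ (f : ℝ → E) (a b : ℝ), f t₀ = x₀ ∧
      a < t ∧ t < b ∧ a < t₀ ∧ t₀ < b ∧ Icc a b ⊆ I ∧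
      ∀ u ∈ Ioo a b, HasDerivAt f (v u (f u)) u := by
    intro t ht
    obtain ⟨a, b, hat, hat₀, htb, ht₀b, hsub⟩ := interval_pick hIopen hIconn ht ht₀
    obtain ⟨K, hK⟩ := hl a b hsub
    obtain ⟨f, hf0, hf⟩ := ode_exists_Icc (le_of_lt hat₀) (le_of_lt ht₀b) hK
      (fun x => (hc x).mono hsub) x₀
    refine ⟨f, a, b, hf0, hat, htb, hat₀, ht₀b, hsub, ?_⟩
    intro u hu
    exact (hf u (Ioo_subset_Icc_self hu)).hasDerivAt (Icc_mem_nhds hu.1 hu.2)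
  -- choose a local solution for every point of `I`
  choose! sol sa sb hsol0 hsa hsb hsa0 hsb0 hsubI hsol using key
  set f : ℝ → E := fun t => if t ∈ I then sol t t else x₀ with hfdef
  -- any two local solutions agree on the intersection of their intervals
  have agree : ∀ t ∈ I, ∀ s ∈ I, ∀ u, u ∈ Ioo (sa t) (sb t) → u ∈ Ioo (sa s) (sb s) →
      sol t u = sol s u := by
    intro t ht s hs u hu1 hu2
    set A : ℝ := max (sa t) (sa s) with hA
    set B : ℝ := min (sb t) (sb s) with hB
    have hsubt : Ioo A B ⊆ Ioo (sa t) (sb t) :=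
      Ioo_subset_Ioo (le_max_left _ _) (min_le_left _ _)
    have hsubs : Ioo A B ⊆ Ioo (sa s) (sb s) :=
      Ioo_subset_Ioo (le_max_right _ _) (min_le_right _ _)
    have hsubAB : Icc A B ⊆ I := by
      intro w hw
      exact hsubI t ht ⟨le_trans (le_max_left _ _) hw.1, le_trans hw.2 (min_le_left _ _)⟩
    obtain ⟨K, hK⟩ := hl A B hsubAB
    have ht₀AB : t₀ ∈ Ioo A B :=
      ⟨max_lt (hsa0 t ht) (hsa0 s hs), lt_min (hsb0 t ht) (hsb0 s hs)⟩
    have huAB : u ∈ Ioo A B :=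
      ⟨max_lt hu1.1 hu2.1, lt_min hu1.2 hu2.2⟩
    exact ode_uniq_Ioo hK ht₀AB
      (fun w hw => hsol t ht w (hsubt hw))
      (fun w hw => hsol s hs w (hsubs hw))
      (by rw [hsol0 t ht, hsol0 s hs]) huAB
  -- `f` agrees with `sol t` near each `t ∈ I`
  have flocal : ∀ t ∈ I, ∀ u ∈ Ioo (sa t) (sb t), f u = sol t u := by
    intro t ht u hu
    have huI : u ∈ I := hsubI t ht (Ioo_subset_Icc_self hu)
    have : f u = sol u u := by rw [hfdef]; simp [huI]
    rw [this]
    exact agree u huI t ht u ⟨hsa u huI, hsb u huI⟩ hu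
  refine ⟨f, ?_, ?_⟩
  · have : f t₀ = sol t₀ t₀ := by rw [hfdef]; simp [ht₀]
    rw [this, hsol0 t₀ ht₀]
  · intro t ht
    have hft : f t = sol t t := flocal t ht t ⟨hsa t ht, hsb t ht⟩
    have heq : f =ᶠ[nhds t] sol t := by
      have hmem : Ioo (sa t) (sb t) ∈ nhds t := Ioo_mem_nhds (hsa t ht) (hsb t ht)
      exact Filter.eventuallyEq_of_mem hmem (fun u hu => flocal t ht u hu)
    have := (hsol t ht t ⟨hsa t ht, hsb t ht⟩).congr_of_eventuallyEq heq
    rwa [hft]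

/-- An affine map on `ℝ × ℝ` is Lipschitz with constant bounding the row sums. -/
lemma lipschitz_affine2 (a11 a12 a21 a22 c1 c2 K : ℝ)
    (h1 : |a11| + |a12| ≤ K) (h2 : |a21| + |a22| ≤ K) :
    LipschitzWith (Real.toNNReal K)
      (fun u : ℝ × ℝ => (a11 * u.1 + a12 * u.2 + c1, a21 * u.1 + a22 * u.2 + c2)) := by
  have hK0 : 0 ≤ K := le_trans (by positivity) h1
  apply LipschitzWith.of_dist_le_mul
  intro u w
  rw [Real.coe_toNNReal _ hK0, Prod.dist_eq]
  have key1 : |u.1 - w.1| ≤ dist u w := by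
    rw [← Real.dist_eq, Prod.dist_eq]; exact le_max_left _ _
  have key2 : |u.2 - w.2| ≤ dist u w := by
    rw [← Real.dist_eq, Prod.dist_eq]; exact le_max_right _ _
  have main : ∀ p p' r : ℝ, |p| + |p'| ≤ r →
      dist (p * u.1 + p' * u.2 + c1) (p * w.1 + p' * w.2 + c1) ≤ r * dist u w := by
    intro p p' r hr
    rw [Real.dist_eq]
    have hid : (p * u.1 + p' * u.2 + c1) - (p * w.1 + p' * w.2 + c1)
        = p * (u.1 - w.1) + p' * (u.2 - w.2) := by ring
    rw [hid]
    calc |p * (u.1 - w.1) + p' * (u.2 - w.2)|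
        ≤ |p * (u.1 - w.1)| + |p' * (u.2 - w.2)| := abs_add_le _ _
      _ = |p| * |u.1 - w.1| + |p'| * |u.2 - w.2| := by rw [abs_mul, abs_mul]
      _ ≤ |p| * dist u w + |p'| * dist u w :=
          add_le_add (mul_le_mul_of_nonneg_left key1 (abs_nonneg _))
            (mul_le_mul_of_nonneg_left key2 (abs_nonneg _))
      _ = (|p| + |p'|) * dist u w := by ring
      _ ≤ r * dist u w := mul_le_mul_of_nonneg_right hr dist_nonneg
  apply max_le
  · exact main a11 a12 K h1
  · have := main a21 a22 K h2
    simpa using this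

/-- The first-order system associated to the self-adjoint equation. -/
noncomputable def saField (κ₀ κ₁ p q h : ℝ → ℝ) : ℝ → ℝ × ℝ → ℝ × ℝ := fun t u =>
  ((u.2 / p t - κ₁ t * u.1) / κ₀ t, (h t - q t * u.1 - κ₁ t * u.2) / κ₀ t)

/-- Existence and uniqueness of solutions of the self-adjoint initial value
problem `D^α[p D^α x] = h`, `x(t₀) = x₀`, `D^α x(t₀) = x₁` on an open interval. -/
theorem selfadjoint_ivp_existence_uniqueness
    (I : Set ℝ) (hIopen : IsOpen I) (hIconn : I.OrdConnected)
    (κ₀ κ₁ : ℝ → ℝ)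
    (hκ₀c : ContinuousOn κ₀ I) (hκ₁c : ContinuousOn κ₁ I)
    (hκ₀pos : ∀ t ∈ I, 0 < κ₀ t) (hκ₁nn : ∀ t ∈ I, 0 ≤ κ₁ t)
    (p q h : ℝ → ℝ)
    (hpc : ContinuousOn p I) (hqc : ContinuousOn q I) (hhc : ContinuousOn h I)
    (hp : ∀ t ∈ I, p t ≠ 0)
    (t₀ : ℝ) (ht₀ : t₀ ∈ I) (x₀ x₁ : ℝ) :
    ∃ x : ℝ → ℝ,
      (IsSolutionSA κ₀ κ₁ p q h I x ∧ x t₀ = x₀ ∧ Dconf κ₀ κ₁ x t₀ = x₁) ∧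
      ∀ y : ℝ → ℝ,
        (IsSolutionSA κ₀ κ₁ p q h I y ∧ y t₀ = x₀ ∧ Dconf κ₀ κ₁ y t₀ = x₁) →
        Set.EqOn y x I := by
  classical
  set v : ℝ → ℝ × ℝ → ℝ × ℝ := saField κ₀ κ₁ p q h with hvdef
  have hκ₀ne : ∀ t ∈ I, κ₀ t ≠ 0 := fun t ht => (hκ₀pos t ht).ne'
  -- Lipschitz on compact subintervals
  have hl : ∀ a b : ℝ, Icc a b ⊆ I → ∃ K : ℝ≥0, ∀ t ∈ Icc a b, LipschitzWith K (v t) := by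
    intro a b hsub
    have hne : ∀ t ∈ Icc a b, κ₀ t ≠ 0 := fun t ht => hκ₀ne t (hsub ht)
    have hpne : ∀ t ∈ Icc a b, p t ≠ 0 := fun t ht => hp t (hsub ht)
    have c1 : ContinuousOn (fun t => κ₁ t / κ₀ t) (Icc a b) :=
      (hκ₁c.mono hsub).div (hκ₀c.mono hsub) hne
    have c2 : ContinuousOn (fun t => 1 / (p t * κ₀ t)) (Icc a b) :=
      continuousOn_const.div ((hpc.mono hsub).mul (hκ₀c.mono hsub))
        (fun t ht => mul_ne_zero (hpne t ht) (hne t ht))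
    have c3 : ContinuousOn (fun t => q t / κ₀ t) (Icc a b) :=
      (hqc.mono hsub).div (hκ₀c.mono hsub) hne
    obtain ⟨B1, hB1⟩ := isCompact_Icc.exists_bound_of_continuousOn c1
    obtain ⟨B2, hB2⟩ := isCompact_Icc.exists_bound_of_continuousOn c2
    obtain ⟨B3, hB3⟩ := isCompact_Icc.exists_bound_of_continuousOn c3
    refine ⟨Real.toNNReal ((B1 + B2) ⊔ (B3 + B1)), ?_⟩
    intro t ht
    have key := lipschitz_affine2 (-(κ₁ t / κ₀ t)) (1 / (p t * κ₀ t)) (-(q t / κ₀ t))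
      (-(κ₁ t / κ₀ t)) 0 (h t / κ₀ t) ((B1 + B2) ⊔ (B3 + B1)) ?_ ?_
    · have heq : v t = fun u : ℝ × ℝ =>
          (-(κ₁ t / κ₀ t) * u.1 + 1 / (p t * κ₀ t) * u.2 + 0,
           -(q t / κ₀ t) * u.1 + -(κ₁ t / κ₀ t) * u.2 + h t / κ₀ t) := by
        funext u
        rw [hvdef]
        simp only [saField, Prod.mk.injEq]
        constructor <;> ring
      rw [heq]
      exact key
    · have e1 := hB1 t ht
      have e2 := hB2 t ht
      rw [Real.norm_eq_abs] at e1 e2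
      rw [abs_neg]
      exact le_trans (add_le_add e1 e2) (le_max_left _ _)
    · have e3 := hB3 t ht
      have e1 := hB1 t ht
      rw [Real.norm_eq_abs] at e1 e3
      rw [abs_neg, abs_neg]
      exact le_trans (add_le_add e3 e1) (le_max_right _ _)
  -- continuity in time
  have hc : ∀ x : ℝ × ℝ, ContinuousOn (fun t => v t x) I := by
    intro x
    rw [hvdef]
    simp only [saField]
    apply ContinuousOn.prodMk
    · exact ((continuousOn_const.div hpc hp).sub (hκ₁c.mul continuousOn_const)).div hκ₀c hκ₀ne
    · exact ((hhc.sub (hqc.mul continuousOn_const)).sub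
        (hκ₁c.mul continuousOn_const)).div hκ₀c hκ₀ne
  obtain ⟨u, hu0, hu⟩ := ode_exists_global hIopen hIconn hl hc ht₀ ((x₀, p t₀ * x₁) : ℝ × ℝ)
  set X : ℝ → ℝ := fun t => (u t).1 with hXdef
  set W : ℝ → ℝ := fun t => (u t).2 with hWdef
  have hX' : ∀ t ∈ I, HasDerivAt X ((W t / p t - κ₁ t * X t) / κ₀ t) t := by
    intro t ht
    have h1 := ((ContinuousLinearMap.fst ℝ ℝ ℝ).hasFDerivAt).comp_hasDerivAt t (hu t ht)
    exact h1
  have hW' : ∀ t ∈ I, HasDerivAt W ((h t - q t * X t - κ₁ t * W t) / κ₀ t) t := by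
    intro t ht
    have h1 := ((ContinuousLinearMap.snd ℝ ℝ ℝ).hasFDerivAt).comp_hasDerivAt t (hu t ht)
    exact h1
  have hXd : ∀ t ∈ I, DifferentiableAt ℝ X t := fun t ht => (hX' t ht).differentiableAt
  have hXderiv : ∀ t ∈ I, deriv X t = (W t / p t - κ₁ t * X t) / κ₀ t :=
    fun t ht => (hX' t ht).deriv
  have hDX : ∀ t ∈ I, Dconf κ₀ κ₁ X t = W t / p t := by
    intro t ht
    simp only [Dconf]
    rw [hXderiv t ht]
    rw [mul_div_assoc']
    field_simp [hκ₀ne t ht, hp t ht]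
    ring
  have hXc : ContinuousOn X I := fun t ht => ((hX' t ht).continuousAt).continuousWithinAt
  have hWc : ContinuousOn W I := fun t ht => ((hW' t ht).continuousAt).continuousWithinAt
  have hPfW : ∀ t ∈ I, p t * Dconf κ₀ κ₁ X t = W t := by
    intro t ht
    rw [hDX t ht, mul_div_assoc']
    field_simp [hp t ht]
  have hPfevt : ∀ t ∈ I, (fun s => p s * Dconf κ₀ κ₁ X s) =ᶠ[nhds t] W := by
    intro t ht
    filter_upwards [hIopen.mem_nhds ht] with s hs using hPfW s hs
  have hPfd : ∀ t ∈ I, DifferentiableAt ℝ (fun s => p s * Dconf κ₀ κ₁ X s) t := by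
    intro t ht
    exact ((hPfevt t ht).differentiableAt_iff).2 (hW' t ht).differentiableAt
  have hPfderiv : ∀ t ∈ I, deriv (fun s => p s * Dconf κ₀ κ₁ X s) t
      = (h t - q t * X t - κ₁ t * W t) / κ₀ t := by
    intro t ht
    rw [(hPfevt t ht).deriv_eq, (hW' t ht).deriv]
  have hDPf : ∀ t ∈ I, Dconf κ₀ κ₁ (fun s => p s * Dconf κ₀ κ₁ X s) t = h t - q t * X t := by
    intro t ht
    show κ₁ t * (p t * Dconf κ₀ κ₁ X t)
      + κ₀ t * deriv (fun s => p s * Dconf κ₀ κ₁ X s) t = h t - q t * X t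
    rw [hPfderiv t ht, hPfW t ht, mul_div_assoc']
    field_simp [hκ₀ne t ht]
    ring
  refine ⟨X, ⟨⟨hXd, ?_, hPfd, ?_, ?_⟩, ?_, ?_⟩, ?_⟩
  · exact (hWc.div hpc hp).congr (fun t ht => hDX t ht)
  · exact (hhc.sub (hqc.mul hXc)).congr (fun t ht => hDPf t ht)
  · intro t ht
    rw [hDPf t ht]
    ring
  · rw [hXdef]
    simp [hu0]
  · rw [hDX t₀ ht₀]
    have : W t₀ = p t₀ * x₁ := by rw [hWdef]; simp [hu0]
    rw [this]
    exact mul_div_cancel_left₀ x₁ (hp t₀ ht₀)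
  -- uniqueness
  rintro y ⟨⟨hyd, _hyDc, hyPd, _hyPDc, hyeq⟩, hy0, hyD0⟩
  set uy : ℝ → ℝ × ℝ := fun t => (y t, p t * Dconf κ₀ κ₁ y t) with huydef
  have huy : ∀ t ∈ I, HasDerivAt uy (v t (uy t)) t := by
    intro t ht
    have hy' : HasDerivAt y (deriv y t) t := (hyd t ht).hasDerivAt
    have hPy' : HasDerivAt (fun s => p s * Dconf κ₀ κ₁ y s)
        (deriv (fun s => p s * Dconf κ₀ κ₁ y s) t) t := (hyPd t ht).hasDerivAt
    have e1 : (v t (uy t)).1 = deriv y t := by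
      show ((p t * Dconf κ₀ κ₁ y t) / p t - κ₁ t * y t) / κ₀ t = deriv y t
      rw [mul_div_cancel_left₀ (Dconf κ₀ κ₁ y t) (hp t ht)]
      show (κ₁ t * y t + κ₀ t * deriv y t - κ₁ t * y t) / κ₀ t = deriv y t
      rw [add_sub_cancel_left]
      exact mul_div_cancel_left₀ (deriv y t) (hκ₀ne t ht)
    have e2 : (v t (uy t)).2 = deriv (fun s => p s * Dconf κ₀ κ₁ y s) t := by
      have heqt := hyeq t ht
      rw [show Dconf κ₀ κ₁ (fun s => p s * Dconf κ₀ κ₁ y s) t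
        = κ₁ t * (p t * Dconf κ₀ κ₁ y t)
          + κ₀ t * deriv (fun s => p s * Dconf κ₀ κ₁ y s) t from rfl] at heqt
      show (h t - q t * y t - κ₁ t * (p t * Dconf κ₀ κ₁ y t)) / κ₀ t
        = deriv (fun s => p s * Dconf κ₀ κ₁ y s) t
      rw [div_eq_iff (hκ₀ne t ht)]
      linarith [heqt]
    have hprod := hy'.prodMk hPy'
    have : v t (uy t) = (deriv y t, deriv (fun s => p s * Dconf κ₀ κ₁ y s) t) :=
      Prod.ext e1 e2
    rw [this]
    exact hprod
  have huy0 : uy t₀ = u t₀ := by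
    rw [hu0]
    show (y t₀, p t₀ * Dconf κ₀ κ₁ y t₀) = (x₀, p t₀ * x₁)
    rw [hy0, hyD0]
  have heqon : Set.EqOn uy u I := ode_uniq_global hIopen hIconn hl ht₀ huy hu huy0
  intro t ht
  exact congrArg Prod.fst (heqon ht)
end

section
/- (Conformable Lagrange identity) Let p, q : I → ℝ be continuous with p(t) > 0 for all t ∈ I, and let Lx(t) := D^α[p·D^α x](t) + q(t)·x(t). If x and y are functions on I such that D^α x, D^α y, D^α[p·D^α x], and D^α[p·D^α y] are continuous on I, then for all t ∈ I: x(t)·Ly(t) − y(t)·Lx(t) = D^α[p·W(x,y)](t) + κ₁(t)·p(t)·W(x,y)(t), where D^α[p·W(x,y)] is the conformable derivative of the function t ↦ p(t)·W(x,y)(t). -/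
open Set

/-- The self-adjoint operator `Lx = D^α[p D^α x] + q x`. -/
noncomputable def Lop (κ₀ κ₁ p q : ℝ → ℝ) (x : ℝ → ℝ) (t : ℝ) : ℝ :=
  Dconf κ₀ κ₁ (fun s => p s * Dconf κ₀ κ₁ x s) t + q t * x t

/-- The conformable Wronskian `W(x,y)(t) = x(t) D^α y(t) - y(t) D^α x(t)`. -/
noncomputable def Wr (κ₀ κ₁ : ℝ → ℝ) (x y : ℝ → ℝ) (t : ℝ) : ℝ :=
  x t * Dconf κ₀ κ₁ y t - y t * Dconf κ₀ κ₁ x t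

/-- Conformable Lagrange identity:
`x Ly - y Lx = D^α[p W(x,y)] + κ₁ p W(x,y)` on `I`. -/
theorem conformable_lagrange_identity
    (I : Set ℝ) (κ₀ κ₁ : ℝ → ℝ)
    (hκ₀c : ContinuousOn κ₀ I) (hκ₁c : ContinuousOn κ₁ I)
    (hκ₀pos : ∀ t ∈ I, 0 < κ₀ t) (hκ₁nn : ∀ t ∈ I, 0 ≤ κ₁ t)
    (p q : ℝ → ℝ)
    (hpc : ContinuousOn p I) (hqc : ContinuousOn q I)
    (hp : ∀ t ∈ I, 0 < p t)
    (x y : ℝ → ℝ)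
    (hxd : ∀ t ∈ I, DifferentiableAt ℝ x t)
    (hxDc : ContinuousOn (Dconf κ₀ κ₁ x) I)
    (hxd2 : ∀ t ∈ I, DifferentiableAt ℝ (fun s => p s * Dconf κ₀ κ₁ x s) t)
    (hxDc2 : ContinuousOn (Dconf κ₀ κ₁ (fun s => p s * Dconf κ₀ κ₁ x s)) I)
    (hyd : ∀ t ∈ I, DifferentiableAt ℝ y t)
    (hyDc : ContinuousOn (Dconf κ₀ κ₁ y) I)
    (hyd2 : ∀ t ∈ I, DifferentiableAt ℝ (fun s => p s * Dconf κ₀ κ₁ y s) t)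
    (hyDc2 : ContinuousOn (Dconf κ₀ κ₁ (fun s => p s * Dconf κ₀ κ₁ y s)) I) :
    ∀ t ∈ I,
      x t * Lop κ₀ κ₁ p q y t - y t * Lop κ₀ κ₁ p q x t
        = Dconf κ₀ κ₁ (fun s => p s * Wr κ₀ κ₁ x y s) t
          + κ₁ t * p t * Wr κ₀ κ₁ x y t := by
  intro t ht
  set u : ℝ → ℝ := fun s => p s * Dconf κ₀ κ₁ x s with hu
  set v : ℝ → ℝ := fun s => p s * Dconf κ₀ κ₁ y s with hv
  have hfun : (fun s => p s * Wr κ₀ κ₁ x y s) = fun s => x s * v s - y s * u s := by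
    funext s; simp only [Wr, hu, hv]; ring
  have hderiv : deriv (fun s => p s * Wr κ₀ κ₁ x y s) t
      = deriv x t * v t + x t * deriv v t - (deriv y t * u t + y t * deriv u t) := by
    rw [hfun, deriv_fun_sub ((hxd t ht).fun_mul (hyd2 t ht)) ((hyd t ht).fun_mul (hxd2 t ht)),
      deriv_fun_mul (hxd t ht) (hyd2 t ht), deriv_fun_mul (hyd t ht) (hxd2 t ht)]
  have e1 : Dconf κ₀ κ₁ v t = κ₁ t * v t + κ₀ t * deriv v t := rfl
  have e2 : Dconf κ₀ κ₁ u t = κ₁ t * u t + κ₀ t * deriv u t := rfl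
  have e3 : Dconf κ₀ κ₁ (fun s => p s * Wr κ₀ κ₁ x y s) t
      = κ₁ t * (p t * Wr κ₀ κ₁ x y t)
        + κ₀ t * deriv (fun s => p s * Wr κ₀ κ₁ x y s) t := rfl
  simp only [Lop]
  rw [← hu, ← hv, e1, e2, e3, hderiv]
  simp only [hu, hv, Wr, Dconf]
  ring
end

section
/- (Green's formula) Let a < b with [a,b] ⊆ I, let p, q : I → ℝ be continuous with p(t) > 0 for all t ∈ I, and let Lx(t) := D^α[p·D^α x](t) + q(t)·x(t). If x and y are functions such that D^α x, D^α y, D^α[p·D^α x], and D^α[p·D^α y] are continuous on [a,b], then ⟨x, Ly⟩ − ⟨Lx, y⟩ = e_0(b,b)²·p(b)·W(x,y)(b) − e_0(b,a)²·p(a)·W(x,y)(a), where ⟨f,g⟩ := ∫_a^b f(t)·g(t)·e_0(b,t)² d_α t. -/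
open Set

/-- The inner product `⟨f,g⟩ = ∫_a^b f(t) g(t) e₀(b,t)² d_α t`. -/
noncomputable def innerConf (κ₀ κ₁ : ℝ → ℝ) (a b : ℝ) (f g : ℝ → ℝ) : ℝ :=
  ∫ t in a..b, f t * g t * (e0 κ₀ κ₁ b t) ^ 2 / κ₀ t

/-- Green's formula:
`⟨x, Ly⟩ - ⟨Lx, y⟩ = e₀(b,b)² p(b) W(x,y)(b) - e₀(b,a)² p(a) W(x,y)(a)`. -/
theorem conformable_greens_formula
    (I : Set ℝ) (κ₀ κ₁ : ℝ → ℝ)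
    (hκ₀c : ContinuousOn κ₀ I) (hκ₁c : ContinuousOn κ₁ I)
    (hκ₀pos : ∀ t ∈ I, 0 < κ₀ t) (hκ₁nn : ∀ t ∈ I, 0 ≤ κ₁ t)
    (a b : ℝ) (hab : a < b) (hIab : Icc a b ⊆ I)
    (p q : ℝ → ℝ)
    (hpc : ContinuousOn p I) (hqc : ContinuousOn q I)
    (hp : ∀ t ∈ I, 0 < p t)
    (x y : ℝ → ℝ)
    (hxd : ∀ t ∈ Icc a b, DifferentiableAt ℝ x t)
    (hxDc : ContinuousOn (Dconf κ₀ κ₁ x) (Icc a b))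
    (hxd2 : ∀ t ∈ Icc a b, DifferentiableAt ℝ (fun s => p s * Dconf κ₀ κ₁ x s) t)
    (hxDc2 : ContinuousOn (Dconf κ₀ κ₁ (fun s => p s * Dconf κ₀ κ₁ x s)) (Icc a b))
    (hyd : ∀ t ∈ Icc a b, DifferentiableAt ℝ y t)
    (hyDc : ContinuousOn (Dconf κ₀ κ₁ y) (Icc a b))
    (hyd2 : ∀ t ∈ Icc a b, DifferentiableAt ℝ (fun s => p s * Dconf κ₀ κ₁ y s) t)
    (hyDc2 : ContinuousOn (Dconf κ₀ κ₁ (fun s => p s * Dconf κ₀ κ₁ y s)) (Icc a b)) :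
    innerConf κ₀ κ₁ a b x (Lop κ₀ κ₁ p q y)
      - innerConf κ₀ κ₁ a b (Lop κ₀ κ₁ p q x) y
      = (e0 κ₀ κ₁ b b) ^ 2 * p b * Wr κ₀ κ₁ x y b
        - (e0 κ₀ κ₁ b a) ^ 2 * p a * Wr κ₀ κ₁ x y a := by
  classical
  set h : ℝ → ℝ := fun τ => κ₁ τ / κ₀ τ with hh
  have hκ₀ne : ∀ t ∈ Icc a b, κ₀ t ≠ 0 := fun t ht => (hκ₀pos t (hIab ht)).ne'
  have hhc : ContinuousOn h (Icc a b) :=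
    (hκ₁c.mono hIab).div (hκ₀c.mono hIab) hκ₀ne
  set Φ : ℝ → ℝ := fun t => ∫ τ in b..t, h τ with hΦdef
  set E : ℝ → ℝ := fun t => Real.exp (2 * Φ t) with hEdef
  have hbmem : b ∈ Icc a b := right_mem_Icc.2 hab.le
  have huIcc : uIcc a b = Icc a b := uIcc_of_le hab.le
  -- e0 squared equals E
  have hEe : ∀ t, (e0 κ₀ κ₁ b t) ^ 2 = E t := by
    intro t
    simp only [e0, E, Φ, h]
    rw [intervalIntegral.integral_symm t b, sq, ← Real.exp_add]
    congr 1
    ring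
  -- integrability of h on subintervals
  have hint : ∀ t ∈ Icc a b, IntervalIntegrable h MeasureTheory.volume b t := by
    intro t ht
    apply ContinuousOn.intervalIntegrable
    apply hhc.mono
    rw [uIcc_comm]
    exact uIcc_subset_Icc ht hbmem
  -- continuity of Φ and E on Icc a b
  have hΦc : ContinuousOn Φ (Icc a b) := by
    rw [← huIcc]
    have h1 : ContinuousOn h (uIcc a b) := by rw [huIcc]; exact hhc
    exact intervalIntegral.continuousOn_primitive_interval' h1.intervalIntegrable right_mem_uIcc
  have hEc : ContinuousOn E (Icc a b) :=
    (Real.continuous_exp.comp_continuousOn (hΦc.const_smul 2 |>.congr (fun t _ => by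
      simp [smul_eq_mul])))
  -- derivative of Φ on the interior
  have hΦd : ∀ t ∈ Ioo a b, HasDerivAt Φ (h t) t := by
    intro t ht
    have htIcc : t ∈ Icc a b := Ioo_subset_Icc_self ht
    have hmem : Ioo a b ∈ nhds t := Ioo_mem_nhds ht.1 ht.2
    have hca : ContinuousAt h t :=
      (hhc.mono Ioo_subset_Icc_self).continuousAt hmem
    exact intervalIntegral.integral_hasDerivAt_right (hint t htIcc)
      (AEStronglyMeasurable.stronglyMeasurableAtFilter_of_mem
        ((hhc.mono Ioo_subset_Icc_self).aestronglyMeasurable measurableSet_Ioo) hmem) hca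
  -- auxiliary functions
  set Px : ℝ → ℝ := fun s => p s * Dconf κ₀ κ₁ x s with hPx
  set Py : ℝ → ℝ := fun s => p s * Dconf κ₀ κ₁ y s with hPy
  set G : ℝ → ℝ := fun s => E s * (x s * Py s - y s * Px s) with hG
  set g : ℝ → ℝ := fun t =>
    x t * Lop κ₀ κ₁ p q y t * E t / κ₀ t - Lop κ₀ κ₁ p q x t * y t * E t / κ₀ t with hg
  -- continuity of the basic functions on Icc
  have hxc : ContinuousOn x (Icc a b) := fun t ht => (hxd t ht).continuousAt.continuousWithinAt
  have hyc : ContinuousOn y (Icc a b) := fun t ht => (hyd t ht).continuousAt.continuousWithinAt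
  have hLyc : ContinuousOn (Lop κ₀ κ₁ p q y) (Icc a b) := by
    apply ContinuousOn.add hyDc2
    exact (hqc.mono hIab).mul hyc
  have hLxc : ContinuousOn (Lop κ₀ κ₁ p q x) (Icc a b) := by
    apply ContinuousOn.add hxDc2
    exact (hqc.mono hIab).mul hxc
  have hgc : ContinuousOn g (Icc a b) := by
    apply ContinuousOn.sub
    · exact ((hxc.mul hLyc).mul hEc).div (hκ₀c.mono hIab) hκ₀ne
    · exact ((hLxc.mul hyc).mul hEc).div (hκ₀c.mono hIab) hκ₀ne
  have hgint : IntervalIntegrable g MeasureTheory.volume a b := by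
    apply ContinuousOn.intervalIntegrable
    rwa [huIcc]
  -- continuity of G on Icc
  have hGc : ContinuousOn G (Icc a b) := by
    apply hEc.mul
    apply ContinuousOn.sub
    · exact hxc.mul ((hpc.mono hIab).mul hyDc)
    · exact hyc.mul ((hpc.mono hIab).mul hxDc)
  -- derivative of G on the interior
  have hGd : ∀ t ∈ Ioo a b, HasDerivAt G (g t) t := by
    intro t ht
    have htIcc : t ∈ Icc a b := Ioo_subset_Icc_self ht
    have hE' : HasDerivAt E (E t * (2 * h t)) t := by
      have := ((hΦd t ht).const_mul 2).exp
      simpa [E] using this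
    have hx' : HasDerivAt x (deriv x t) t := (hxd t htIcc).hasDerivAt
    have hy' : HasDerivAt y (deriv y t) t := (hyd t htIcc).hasDerivAt
    have hPx' : HasDerivAt Px (deriv Px t) t := (hxd2 t htIcc).hasDerivAt
    have hPy' : HasDerivAt Py (deriv Py t) t := (hyd2 t htIcc).hasDerivAt
    have hu : HasDerivAt (fun s => x s * Py s - y s * Px s)
        (deriv x t * Py t + x t * deriv Py t - (deriv y t * Px t + y t * deriv Px t)) t :=
      (hx'.mul hPy').sub (hy'.mul hPx')
    have hGd' : HasDerivAt G
        (E t * (2 * h t) * (x t * Py t - y t * Px t)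
          + E t * (deriv x t * Py t + x t * deriv Py t
            - (deriv y t * Px t + y t * deriv Px t))) t := hE'.mul hu
    convert hGd' using 1
    have hk : κ₀ t ≠ 0 := hκ₀ne t htIcc
    simp only [g, h, Lop, Dconf, Px, Py]
    field_simp
    ring
  -- FTC
  have hFTC : ∫ t in a..b, g t = G b - G a :=
    intervalIntegral.integral_eq_sub_of_hasDerivAt_of_le hab.le hGc hGd hgint
  -- identify LHS with the integral of g
  have hint1 : IntervalIntegrable
      (fun t => x t * Lop κ₀ κ₁ p q y t * (e0 κ₀ κ₁ b t) ^ 2 / κ₀ t)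
      MeasureTheory.volume a b := by
    apply ContinuousOn.intervalIntegrable
    rw [huIcc]
    refine ContinuousOn.div ?_ (hκ₀c.mono hIab) hκ₀ne
    exact (hxc.mul hLyc).mul (by
      refine ContinuousOn.congr (hEc) (fun t _ => hEe t))
  have hint2 : IntervalIntegrable
      (fun t => Lop κ₀ κ₁ p q x t * y t * (e0 κ₀ κ₁ b t) ^ 2 / κ₀ t)
      MeasureTheory.volume a b := by
    apply ContinuousOn.intervalIntegrable
    rw [huIcc]
    refine ContinuousOn.div ?_ (hκ₀c.mono hIab) hκ₀ne
    exact (hLxc.mul hyc).mul (by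
      refine ContinuousOn.congr (hEc) (fun t _ => hEe t))
  have hLHS : innerConf κ₀ κ₁ a b x (Lop κ₀ κ₁ p q y)
      - innerConf κ₀ κ₁ a b (Lop κ₀ κ₁ p q x) y = ∫ t in a..b, g t := by
    simp only [innerConf]
    rw [← intervalIntegral.integral_sub hint1 hint2]
    apply intervalIntegral.integral_congr
    intro t _
    simp only [g, hEe t]
  rw [hLHS, hFTC]
  simp only [G, Wr, Px, Py, hEe]
  ring
end

section
/- (Liouville's Theorem) Let A, B, C : I → ℝ be continuous with A(t) ≠ 0 for all t ∈ I, and let t₀ ∈ I. If x and y are twice-differentiable solutions on I of A(t)·D^α[D^α x](t) + B(t)·D^α x(t) + C(t)·x(t) = 0, then their Wronskian satisfies W(x,y)(t) = W(x,y)(t₀)·exp(∫_{t₀}^t (−B(τ)/A(τ) − 2κ₁(τ))/κ₀(τ) dτ) for all t ∈ I. -/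
open Set

/-- Liouville's theorem: if `x, y` solve
`A D^α D^α x + B D^α x + C x = 0` on the interval `I`, then
`W(x,y)(t) = W(x,y)(t₀) · exp(∫_{t₀}^t (-B/A - 2κ₁)/κ₀)`
(i.e. `W(x,y)(t) = W(x,y)(t₀) e_{(-B/A-κ₁)}(t,t₀)`). -/
theorem liouville_formula
    (I : Set ℝ) (hIconn : I.OrdConnected)
    (κ₀ κ₁ : ℝ → ℝ)
    (hκ₀c : ContinuousOn κ₀ I) (hκ₁c : ContinuousOn κ₁ I)
    (hκ₀pos : ∀ t ∈ I, 0 < κ₀ t) (hκ₁nn : ∀ t ∈ I, 0 ≤ κ₁ t)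
    (A B C : ℝ → ℝ)
    (hAc : ContinuousOn A I) (hBc : ContinuousOn B I) (hCc : ContinuousOn C I)
    (hA : ∀ t ∈ I, A t ≠ 0)
    (t₀ : ℝ) (ht₀ : t₀ ∈ I)
    (x y : ℝ → ℝ)
    (hxd : ∀ t ∈ I, DifferentiableAt ℝ x t)
    (hxd2 : ∀ t ∈ I, DifferentiableAt ℝ (Dconf κ₀ κ₁ x) t)
    (hxeq : ∀ t ∈ I,
      A t * Dconf κ₀ κ₁ (Dconf κ₀ κ₁ x) t + B t * Dconf κ₀ κ₁ x t + C t * x t = 0)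
    (hyd : ∀ t ∈ I, DifferentiableAt ℝ y t)
    (hyd2 : ∀ t ∈ I, DifferentiableAt ℝ (Dconf κ₀ κ₁ y) t)
    (hyeq : ∀ t ∈ I,
      A t * Dconf κ₀ κ₁ (Dconf κ₀ κ₁ y) t + B t * Dconf κ₀ κ₁ y t + C t * y t = 0) :
    ∀ t ∈ I,
      Wr κ₀ κ₁ x y t
        = Wr κ₀ κ₁ x y t₀
          * Real.exp (∫ τ in t₀..t, (-(B τ) / A τ - 2 * κ₁ τ) / κ₀ τ) := by
  have hκ₀ne : ∀ s ∈ I, κ₀ s ≠ 0 := fun s hs => (hκ₀pos s hs).ne'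
  set p : ℝ → ℝ := fun τ => (-(B τ) / A τ - 2 * κ₁ τ) / κ₀ τ with hpdef
  have hpc : ContinuousOn p I :=
    ((hBc.neg.div hAc hA).sub (continuousOn_const.mul hκ₁c)).div hκ₀c hκ₀ne
  set F : ℝ → ℝ := fun u => ∫ τ in t₀..u, p τ with hFdef
  set g : ℝ → ℝ := fun u => Wr κ₀ κ₁ x y u * Real.exp (-F u) with hgdef
  -- derivative of the Wronskian
  have hW : ∀ s ∈ I, HasDerivAt (Wr κ₀ κ₁ x y) (p s * Wr κ₀ κ₁ x y s) s := by
    intro s hs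
    have hk0 := hκ₀ne s hs
    have ha := hA s hs
    have hx1 := (hxd s hs).hasDerivAt
    have hy1 := (hyd s hs).hasDerivAt
    have hx2 := (hxd2 s hs).hasDerivAt
    have hy2 := (hyd2 s hs).hasDerivAt
    have ex' : deriv x s = (Dconf κ₀ κ₁ x s - κ₁ s * x s) / κ₀ s := by
      rw [eq_div_iff hk0]
      have : Dconf κ₀ κ₁ x s = κ₁ s * x s + κ₀ s * deriv x s := rfl
      linarith [this]
    have ey' : deriv y s = (Dconf κ₀ κ₁ y s - κ₁ s * y s) / κ₀ s := by
      rw [eq_div_iff hk0]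
      have : Dconf κ₀ κ₁ y s = κ₁ s * y s + κ₀ s * deriv y s := rfl
      linarith [this]
    have edX : deriv (Dconf κ₀ κ₁ x) s
        = (-(B s) * Dconf κ₀ κ₁ x s - C s * x s - A s * κ₁ s * Dconf κ₀ κ₁ x s)
          / (A s * κ₀ s) := by
      rw [eq_div_iff (mul_ne_zero ha hk0)]
      have h := hxeq s hs
      simp only [Dconf] at h ⊢
      linear_combination h
    have edY : deriv (Dconf κ₀ κ₁ y) s
        = (-(B s) * Dconf κ₀ κ₁ y s - C s * y s - A s * κ₁ s * Dconf κ₀ κ₁ y s)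
          / (A s * κ₀ s) := by
      rw [eq_div_iff (mul_ne_zero ha hk0)]
      have h := hyeq s hs
      simp only [Dconf] at h ⊢
      linear_combination h
    have h : HasDerivAt (fun u => x u * Dconf κ₀ κ₁ y u - y u * Dconf κ₀ κ₁ x u)
        (deriv x s * Dconf κ₀ κ₁ y s + x s * deriv (Dconf κ₀ κ₁ y) s
          - (deriv y s * Dconf κ₀ κ₁ x s + y s * deriv (Dconf κ₀ κ₁ x) s)) s :=
      (hx1.mul hy2).sub (hy1.mul hx2)
    have hval : deriv x s * Dconf κ₀ κ₁ y s + x s * deriv (Dconf κ₀ κ₁ y) s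
          - (deriv y s * Dconf κ₀ κ₁ x s + y s * deriv (Dconf κ₀ κ₁ x) s)
        = p s * Wr κ₀ κ₁ x y s := by
      rw [ex', ey', edX, edY, hpdef]
      simp only [Wr]
      field_simp
      ring
    rw [hval] at h
    exact h
  -- g is constant on I
  have key : ∀ u ∈ I, ∀ v ∈ I, u ≤ v → g v = g u := by
    intro u hu v hv huv
    rcases eq_or_lt_of_le huv with rfl | hlt
    · rfl
    have hsub : Icc u v ⊆ I := hIconn.out hu hv
    have hgd : ∀ w ∈ Icc u v, HasDerivWithinAt g 0 (Icc u v) w := by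
      intro w hw
      haveI : Fact (w ∈ Icc u v) := ⟨hw⟩
      have hwI : w ∈ I := hsub hw
      have hint : IntervalIntegrable p MeasureTheory.volume t₀ w :=
        (hpc.mono (hIconn.uIcc_subset ht₀ hwI)).intervalIntegrable
      have hmeas : StronglyMeasurableAtFilter p (nhdsWithin w (Icc u v))
          MeasureTheory.volume :=
        ⟨Icc u v, self_mem_nhdsWithin,
          (hpc.mono hsub).aestronglyMeasurable measurableSet_Icc⟩
      have hFd : HasDerivWithinAt F (p w) (Icc u v) w :=
        intervalIntegral.integral_hasDerivWithinAt_right hint hmeas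
          ((hpc.mono hsub) w hw)
      have hE : HasDerivWithinAt (fun u => Real.exp (-F u))
          (Real.exp (-F w) * (-p w)) (Icc u v) w := hFd.neg.exp
      have hprod := ((hW w hwI).hasDerivWithinAt.mul hE)
      have h0 : p w * Wr κ₀ κ₁ x y w * Real.exp (-F w)
          + Wr κ₀ κ₁ x y w * (Real.exp (-F w) * (-p w)) = 0 := by ring
      rw [h0] at hprod
      exact hprod
    have hdiff : DifferentiableOn ℝ g (Icc u v) :=
      fun w hw => (hgd w hw).differentiableWithinAt
    have hconst := constant_of_derivWithin_zero hdiff (fun w hw =>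
      (hgd w (Ico_subset_Icc_self hw)).derivWithin
        (uniqueDiffOn_Icc hlt w (Ico_subset_Icc_self hw)))
    exact hconst v (right_mem_Icc.2 huv)
  intro t ht
  have hg : g t = g t₀ := by
    rcases le_total t₀ t with h | h
    · exact key t₀ ht₀ t ht h
    · exact (key t ht t₀ ht₀ h).symm
  have hFt₀ : F t₀ = 0 := intervalIntegral.integral_same
  have hgt₀ : g t₀ = Wr κ₀ κ₁ x y t₀ := by
    rw [hgdef]; simp [hFt₀]
  have hgt : Wr κ₀ κ₁ x y t * Real.exp (-F t) = Wr κ₀ κ₁ x y t₀ := by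
    rw [← hgt₀, ← hg]
  calc Wr κ₀ κ₁ x y t
      = Wr κ₀ κ₁ x y t * Real.exp (-F t) * Real.exp (F t) := by
        rw [mul_assoc, ← Real.exp_add]; simp
    _ = Wr κ₀ κ₁ x y t₀ * Real.exp (F t) := by rw [hgt]
end

section
/- (Riccati Factorization Theorem) Let p, q : I → ℝ be continuous with p(t) > 0 for all t ∈ I, let Lx(t) := D^α[p·D^α x](t) + q(t)·x(t), and let Rz(t) := D^α z(t) + q(t) + z(t)²/p(t) − κ₁(t)·z(t). If x is a function with D^α x and D^α[p·D^α x] continuous on I and x(t) ≠ 0 for all t ∈ I, and z is defined by z(t) := p(t)·D^α x(t)/x(t), then Lx(t) = x(t)·Rz(t) for all t ∈ I. -/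
open Set

/-- Riccati Factorization Theorem: with `z = p D^α x / x`,
`Lx = x · Rz` on `I`, where `Lx = D^α[p D^α x] + q x` and
`Rz = D^α z + q + z²/p - κ₁ z`. -/
theorem riccati_factorization
    (I : Set ℝ) (κ₀ κ₁ : ℝ → ℝ)
    (hκ₀c : ContinuousOn κ₀ I) (hκ₁c : ContinuousOn κ₁ I)
    (hκ₀pos : ∀ t ∈ I, 0 < κ₀ t) (hκ₁nn : ∀ t ∈ I, 0 ≤ κ₁ t)
    (p q : ℝ → ℝ)
    (hpc : ContinuousOn p I) (hqc : ContinuousOn q I)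
    (hp : ∀ t ∈ I, 0 < p t)
    (x : ℝ → ℝ)
    (hxd : ∀ t ∈ I, DifferentiableAt ℝ x t)
    (hxDc : ContinuousOn (Dconf κ₀ κ₁ x) I)
    (hxd2 : ∀ t ∈ I, DifferentiableAt ℝ (fun s => p s * Dconf κ₀ κ₁ x s) t)
    (hxDc2 : ContinuousOn (Dconf κ₀ κ₁ (fun s => p s * Dconf κ₀ κ₁ x s)) I)
    (hxne : ∀ t ∈ I, x t ≠ 0)
    (z : ℝ → ℝ)
    (hz : ∀ t, z t = p t * Dconf κ₀ κ₁ x t / x t) :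
    ∀ t ∈ I,
      Dconf κ₀ κ₁ (fun s => p s * Dconf κ₀ κ₁ x s) t + q t * x t
        = x t * (Dconf κ₀ κ₁ z t + q t + (z t) ^ 2 / p t - κ₁ t * z t) := by
  intro t ht
  have hx0 := hxne t ht
  have hp0 := (hp t ht).ne'
  have hzf : z = fun s => (p s * Dconf κ₀ κ₁ x s) / x s := funext hz
  have hdz : deriv z t =
      (deriv (fun s => p s * Dconf κ₀ κ₁ x s) t * x t
        - p t * Dconf κ₀ κ₁ x t * deriv x t) / (x t) ^ 2 := by
    rw [hzf]
    exact deriv_div (hxd2 t ht) (hxd t ht) hx0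
  have hDx : Dconf κ₀ κ₁ x t = κ₁ t * x t + κ₀ t * deriv x t := rfl
  simp only [Dconf, hdz, hz t, hDx]
  field_simp
  ring
end

section
/- (Picone Identity I) Let a < b with [a,b] ⊆ I, and let p, q : I → ℝ be continuous with p(t) > 0 for all t ∈ I. Suppose z is a solution on [a,b] of the Riccati equation D^α z(t) + q(t) + z(t)²/p(t) − κ₁(t)·z(t) = 0. Then for every differentiable function η on [a,b], the identity D^α[z·η²](t) + κ₁(t)·z(t)·η(t)² = p(t)·(D^α η(t))² − q(t)·η(t)² − p(t)·(D^α η(t) − z(t)·η(t)/p(t))² holds for all t ∈ [a,b], where D^α[z·η²] is the conformable derivative of the function t ↦ z(t)·η(t)². -/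
open Set

/-- Picone Identity I: if `z` solves the Riccati equation
`D^α z + q + z²/p - κ₁ z = 0` on `[a,b]`, then for every differentiable `η`,
`D^α[z η²] + κ₁ z η² = p (D^α η)² - q η² - p (D^α η - z η/p)²` on `[a,b]`. -/
theorem picone_identity_I
    (I : Set ℝ) (κ₀ κ₁ : ℝ → ℝ)
    (hκ₀c : ContinuousOn κ₀ I) (hκ₁c : ContinuousOn κ₁ I)
    (hκ₀pos : ∀ t ∈ I, 0 < κ₀ t) (hκ₁nn : ∀ t ∈ I, 0 ≤ κ₁ t)
    (a b : ℝ) (hab : a < b) (hIab : Icc a b ⊆ I)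
    (p q : ℝ → ℝ)
    (hpc : ContinuousOn p I) (hqc : ContinuousOn q I)
    (hp : ∀ t ∈ I, 0 < p t)
    (z : ℝ → ℝ)
    (hzd : ∀ t ∈ Icc a b, DifferentiableAt ℝ z t)
    (hzDc : ContinuousOn (Dconf κ₀ κ₁ z) (Icc a b))
    (hz : ∀ t ∈ Icc a b,
      Dconf κ₀ κ₁ z t + q t + (z t) ^ 2 / p t - κ₁ t * z t = 0)
    (η : ℝ → ℝ)
    (hη : ∀ t ∈ Icc a b, DifferentiableAt ℝ η t) :
    ∀ t ∈ Icc a b,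
      Dconf κ₀ κ₁ (fun s => z s * (η s) ^ 2) t + κ₁ t * z t * (η t) ^ 2
        = p t * (Dconf κ₀ κ₁ η t) ^ 2 - q t * (η t) ^ 2
          - p t * (Dconf κ₀ κ₁ η t - z t * η t / p t) ^ 2 := by
  intro t ht
  have hpt : p t ≠ 0 := (hp t (hIab ht)).ne'
  have hd : deriv (fun s => z s * (η s) ^ 2) t
      = deriv z t * (η t) ^ 2 + z t * (2 * η t * deriv η t) := by
    rw [deriv_fun_mul (d := fun s => η s ^ 2) (hzd t ht) ((hη t ht).pow 2), deriv_fun_pow (hη t ht) 2]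
    ring
  have hzeq := hz t ht
  simp only [Dconf] at hzeq ⊢
  rw [hd]
  have hκz : κ₀ t * deriv z t = -q t - (z t) ^ 2 / p t := by linarith
  have hκz2 : κ₀ t * deriv z t * p t = -q t * p t - z t ^ 2 := by
    field_simp at hκz
    linarith
  field_simp
  linear_combination η t ^ 2 * hκz2
end

section
/- (Lyapunov Inequality) Let 0 ≤ a < b with [a,b] ⊆ I ⊆ [0,∞), and let q : I → ℝ be continuous with q(t) > 0 for all t ∈ I. If the equation D^α[D^α x](t) + q(t)·x(t) = 0 has a nontrivial solution x on [a,b] with x(a) = x(b) = 0, then ∫_a^b q(t)·e_0(b,t) d_α t ≥ 4·e_0(b,a)/h₁(b,a). -/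
open Set MeasureTheory intervalIntegral

lemma lyap_core {a b : ℝ} (hab : a < b) {w Q u v : ℝ → ℝ}
    (hw : ContinuousOn w (Icc a b)) (hwpos : ∀ t ∈ Icc a b, 0 < w t)
    (hQ : ContinuousOn Q (Icc a b)) (hQnn : ∀ t ∈ Icc a b, 0 ≤ Q t)
    (hu : ContinuousOn u (Icc a b)) (hv : ContinuousOn v (Icc a b))
    (hu' : ∀ t ∈ Ioo a b, HasDerivAt u (v t * w t) t)
    (hv' : ∀ t ∈ Ioo a b, HasDerivAt v (-(Q t * u t * w t)) t)
    (hua : u a = 0) (hub : u b = 0) (hnt : ∃ t ∈ Icc a b, u t ≠ 0) :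
    4 / (∫ t in a..b, w t) ≤ ∫ t in a..b, Q t * w t := by
  have hab' : a ≤ b := hab.le
  have huicc : uIcc a b = Icc a b := uIcc_of_le hab'
  -- integrability helpers
  have hInt : ∀ {f : ℝ → ℝ}, ContinuousOn f (Icc a b) → IntervalIntegrable f volume a b := by
    intro f hf
    exact (hf.mono (by rw [huicc])).intervalIntegrable
  have habs : ContinuousOn (fun t => |v t| * w t) (Icc a b) := hv.abs.mul hw
  have hvw : ContinuousOn (fun t => v t * w t) (Icc a b) := hv.mul hw
  have hQw : ContinuousOn (fun t => Q t * w t) (Icc a b) := hQ.mul hw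
  have hv2w : ContinuousOn (fun t => v t ^ 2 * w t) (Icc a b) := (hv.pow 2).mul hw
  have hQu2w : ContinuousOn (fun t => Q t * u t ^ 2 * w t) (Icc a b) :=
    (hQ.mul (hu.pow 2)).mul hw
  set W := ∫ t in a..b, w t with hW
  have hWpos : 0 < W :=
    intervalIntegral_pos_of_pos_on (hInt hw) (fun t ht => hwpos t (Ioo_subset_Icc_self ht)) hab
  -- max point
  obtain ⟨c, hc, hcmax⟩ := (isCompact_Icc (a := a) (b := b)).exists_isMaxOn
    (nonempty_Icc.2 hab') hu.abs
  set M := |u c| with hM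
  have hMb : ∀ t ∈ Icc a b, |u t| ≤ M := fun t ht => hcmax ht
  have hMpos : 0 < M := by
    obtain ⟨t, ht, hne⟩ := hnt
    exact lt_of_lt_of_le (abs_pos.2 hne) (hMb t ht)
  -- FTC on [a,c] and [c,b]
  have hftc : ∀ {s e : ℝ}, a ≤ s → s ≤ e → e ≤ b →
      ∫ t in s..e, v t * w t = u e - u s := by
    intro s e hs hse he
    refine integral_eq_sub_of_hasDeriv_right_of_le hse
      (hu.mono (Icc_subset_Icc hs he)) (fun t ht => ?_) ?_
    · exact ((hu' t ⟨lt_of_le_of_lt hs ht.1, lt_of_lt_of_le ht.2 he⟩)).hasDerivWithinAt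
    · exact ((hvw.mono (Icc_subset_Icc hs he)).mono
        (by rw [uIcc_of_le hse])).intervalIntegrable
  have h1 : u c = ∫ t in a..c, v t * w t := by rw [hftc le_rfl hc.1 hc.2, hua, sub_zero]
  have h2 : -u c = ∫ t in c..b, v t * w t := by rw [hftc hc.1 hc.2 le_rfl, hub]; ring
  -- 2M ≤ B
  set B := ∫ t in a..b, |v t| * w t with hB
  have habs_le : ∀ {s e : ℝ}, a ≤ s → s ≤ e → e ≤ b →
      |∫ t in s..e, v t * w t| ≤ ∫ t in s..e, |v t| * w t := by
    intro s e hs hse he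
    refine (abs_integral_le_integral_abs hse).trans ?_
    refine integral_mono_on hse ?_ ?_ (fun t ht => ?_)
    · exact ((hvw.mono (Icc_subset_Icc hs he)).mono (by rw [uIcc_of_le hse])).intervalIntegrable.abs
    · exact ((habs.mono (Icc_subset_Icc hs he)).mono (by rw [uIcc_of_le hse])).intervalIntegrable
    · have := hwpos t ⟨hs.trans ht.1, ht.2.trans he⟩
      rw [abs_mul, abs_of_pos this]
  have h2M : 2 * M ≤ B := by
    have e1 : M ≤ ∫ t in a..c, |v t| * w t := by
      calc M = |u c| := rfl
        _ = |∫ t in a..c, v t * w t| := by rw [h1]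
        _ ≤ _ := habs_le le_rfl hc.1 hc.2
    have e2 : M ≤ ∫ t in c..b, |v t| * w t := by
      calc M = |-u c| := by rw [abs_neg]
        _ = |∫ t in c..b, v t * w t| := by rw [h2]
        _ ≤ _ := habs_le hc.1 hc.2 le_rfl
    have hadd : (∫ t in a..c, |v t| * w t) + ∫ t in c..b, |v t| * w t = B := by
      refine integral_add_adjacent_intervals ?_ ?_
      · exact ((habs.mono (Icc_subset_Icc le_rfl hc.2)).mono
          (by rw [uIcc_of_le hc.1])).intervalIntegrable
      · exact ((habs.mono (Icc_subset_Icc hc.1 le_rfl)).mono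
          (by rw [uIcc_of_le hc.2])).intervalIntegrable
    linarith
  -- Cauchy-Schwarz: B^2 ≤ W * ∫ v^2 w
  set A := ∫ t in a..b, v t ^ 2 * w t with hA
  have hCS : B ^ 2 ≤ W * A := by
    set lam := B / W with hlam
    have key : 0 ≤ A - 2 * lam * B + lam ^ 2 * W := by
      have : 0 ≤ ∫ t in a..b, (|v t| - lam) ^ 2 * w t := by
        refine integral_nonneg hab' fun t ht => ?_
        exact mul_nonneg (sq_nonneg _) (hwpos t ht).le
      have expand : ∫ t in a..b, (|v t| - lam) ^ 2 * w t
          = A - 2 * lam * B + lam ^ 2 * W := by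
        have hpt : ∀ t, (|v t| - lam) ^ 2 * w t
            = v t ^ 2 * w t - 2 * lam * (|v t| * w t) + lam ^ 2 * w t := by
          intro t
          rw [← sq_abs (v t)]
          ring
        simp only [hpt]
        rw [integral_add ((hInt hv2w).sub ((hInt habs).const_mul _))
            ((hInt hw).const_mul _),
          integral_sub (hInt hv2w) ((hInt habs).const_mul _),
          intervalIntegral.integral_const_mul, intervalIntegral.integral_const_mul]
      linarith [expand ▸ this]
    have : A - 2 * (B / W) * B + (B / W) ^ 2 * W = A - B ^ 2 / W := by
      field_simp; ring
    rw [hlam, this] at key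
    have : B ^ 2 / W ≤ A := by linarith
    calc B ^ 2 = B ^ 2 / W * W := by field_simp
      _ ≤ A * W := by exact mul_le_mul_of_nonneg_right this hWpos.le
      _ = W * A := mul_comm _ _
  -- integration by parts: A = ∫ Q u^2 w
  have hIBP : A = ∫ t in a..b, Q t * u t ^ 2 * w t := by
    have hder : ∀ t ∈ Ioo a b, HasDerivAt (fun t => u t * v t)
        (v t ^ 2 * w t - Q t * u t ^ 2 * w t) t := by
      intro t ht
      have := (hu' t ht).mul (hv' t ht)
      convert this using 1
      · rfl
      · rfl
      · rfl
      ring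
    have := integral_eq_sub_of_hasDeriv_right_of_le hab' (hu.mul hv)
      (fun t ht => (hder t ht).hasDerivWithinAt)
      (hInt (hv2w.sub hQu2w))
    simp only [Pi.mul_apply] at this
    rw [hua, hub, zero_mul, zero_mul, sub_zero] at this
    have hsplit : ∫ t in a..b, (v t ^ 2 * w t - Q t * u t ^ 2 * w t)
        = A - ∫ t in a..b, Q t * u t ^ 2 * w t :=
      integral_sub (hInt hv2w) (hInt hQu2w)
    rw [hsplit] at this
    linarith
  -- bound
  have hbound : (∫ t in a..b, Q t * u t ^ 2 * w t) ≤ M ^ 2 * ∫ t in a..b, Q t * w t := by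
    rw [← intervalIntegral.integral_const_mul]
    refine integral_mono_on hab' (hInt hQu2w) (hInt (continuousOn_const.mul hQw))
      (fun t ht => ?_)
    have h1 : u t ^ 2 ≤ M ^ 2 := by
      have := hMb t ht
      nlinarith [abs_nonneg (u t), sq_abs (u t)]
    have hQt := hQnn t ht
    have hwt := (hwpos t ht).le
    nlinarith [mul_nonneg (mul_nonneg (sub_nonneg.2 h1) hQt) hwt]
  -- combine
  have hQwnn : 0 ≤ ∫ t in a..b, Q t * w t :=
    integral_nonneg hab' fun t ht => mul_nonneg (hQnn t ht) (hwpos t ht).le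
  have final : 4 * M ^ 2 ≤ W * (M ^ 2 * ∫ t in a..b, Q t * w t) := by
    calc 4 * M ^ 2 = (2 * M) ^ 2 := by ring
      _ ≤ B ^ 2 := by nlinarith
      _ ≤ W * A := hCS
      _ = W * ∫ t in a..b, Q t * u t ^ 2 * w t := by rw [hIBP]
      _ ≤ W * (M ^ 2 * ∫ t in a..b, Q t * w t) := by
          exact mul_le_mul_of_nonneg_left hbound hWpos.le
  rw [div_le_iff₀ hWpos]
  have final' : 4 * M ^ 2 ≤ (∫ t in a..b, Q t * w t) * W * M ^ 2 := by
    calc 4 * M ^ 2 ≤ W * (M ^ 2 * ∫ t in a..b, Q t * w t) := final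
      _ = (∫ t in a..b, Q t * w t) * W * M ^ 2 := by ring
  have h4 : (4 : ℝ) * M ^ 2 = 4 * M ^ 2 := rfl
  exact le_of_mul_le_mul_right (by linarith) (pow_pos hMpos 2)

/-- Lyapunov's inequality: if `D^α D^α x + q x = 0` has a nontrivial solution on
`[a,b]` with `x(a) = x(b) = 0`, then
`∫_a^b q(t) e₀(b,t) d_α t ≥ 4 e₀(b,a) / h₁(b,a)`. -/
theorem lyapunov_inequality
    (I : Set ℝ) (hIsub : I ⊆ Ici 0)
    (κ₀ κ₁ : ℝ → ℝ)
    (hκ₀c : ContinuousOn κ₀ I) (hκ₁c : ContinuousOn κ₁ I)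
    (hκ₀pos : ∀ t ∈ I, 0 < κ₀ t) (hκ₁nn : ∀ t ∈ I, 0 ≤ κ₁ t)
    (a b : ℝ) (ha : 0 ≤ a) (hab : a < b) (hIab : Icc a b ⊆ I)
    (q : ℝ → ℝ) (hqc : ContinuousOn q I) (hq : ∀ t ∈ I, 0 < q t)
    (x : ℝ → ℝ)
    (hxd : ∀ t ∈ Icc a b, DifferentiableAt ℝ x t)
    (hxDc : ContinuousOn (Dconf κ₀ κ₁ x) (Icc a b))
    (hxd2 : ∀ t ∈ Icc a b, DifferentiableAt ℝ (Dconf κ₀ κ₁ x) t)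
    (hxDDc : ContinuousOn (Dconf κ₀ κ₁ (Dconf κ₀ κ₁ x)) (Icc a b))
    (hxeq : ∀ t ∈ Icc a b,
      Dconf κ₀ κ₁ (Dconf κ₀ κ₁ x) t + q t * x t = 0)
    (hxa : x a = 0) (hxb : x b = 0)
    (hxnontriv : ∃ t ∈ Icc a b, x t ≠ 0) :
    (∫ t in a..b, q t * e0 κ₀ κ₁ b t / κ₀ t)
      ≥ 4 * e0 κ₀ κ₁ b a / (∫ t in a..b, 1 / κ₀ t) := by
  have hab' : a ≤ b := hab.le
  -- restrict continuity to Icc a b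
  have hκ₀ : ContinuousOn κ₀ (Icc a b) := hκ₀c.mono hIab
  have hκ₁ : ContinuousOn κ₁ (Icc a b) := hκ₁c.mono hIab
  have hqcc : ContinuousOn q (Icc a b) := hqc.mono hIab
  have hκ₀p : ∀ t ∈ Icc a b, 0 < κ₀ t := fun t ht => hκ₀pos t (hIab ht)
  have hκ₀ne : ∀ t ∈ Icc a b, κ₀ t ≠ 0 := fun t ht => (hκ₀p t ht).ne'
  set r : ℝ → ℝ := fun t => κ₁ t / κ₀ t with hrdef
  have hr : ContinuousOn r (Icc a b) := hκ₁.div hκ₀ hκ₀ne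
  have hrnn : ∀ t ∈ Icc a b, 0 ≤ r t := fun t ht =>
    div_nonneg (hκ₁nn t (hIab ht)) (hκ₀p t ht).le
  have hrint : ∀ {s e : ℝ}, s ∈ Icc a b → e ∈ Icc a b → IntervalIntegrable r volume s e := by
    intro s e hs he
    exact ((hr.mono (uIcc_subset_Icc hs he))).intervalIntegrable
  have hamem : a ∈ Icc a b := left_mem_Icc.2 hab'
  have hbmem : b ∈ Icc a b := right_mem_Icc.2 hab'
  set F : ℝ → ℝ := fun t => ∫ τ in a..t, r τ with hFdef
  have hFcont : ContinuousOn F (Icc a b) := by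
    have := continuousOn_primitive_interval' (μ := volume) (hrint hamem hbmem)
      left_mem_uIcc
    rwa [uIcc_of_le hab'] at this
  have hrca : ∀ t ∈ Ioo a b, ContinuousAt r t := fun t ht =>
    hr.continuousAt (Icc_mem_nhds ht.1 ht.2)
  have hF' : ∀ t ∈ Ioo a b, HasDerivAt F (r t) t := by
    intro t ht
    exact integral_hasDerivAt_right (hrint hamem (Ioo_subset_Icc_self ht))
      (ContinuousAt.stronglyMeasurableAtFilter isOpen_Ioo hrca t ht) (hrca t ht)
  set E : ℝ → ℝ := fun t => Real.exp (F t) with hEdef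
  have hEcont : ContinuousOn E (Icc a b) := Real.continuous_exp.comp_continuousOn hFcont
  have hEpos : ∀ t, 0 < E t := fun t => Real.exp_pos _
  have hE' : ∀ t ∈ Ioo a b, HasDerivAt E (E t * r t) t := fun t ht => (hF' t ht).exp
  set X : ℝ → ℝ := Dconf κ₀ κ₁ x with hXdef
  set u : ℝ → ℝ := fun t => E t * x t with hudef
  set v : ℝ → ℝ := fun t => E t * X t with hvdef
  set w : ℝ → ℝ := fun t => (κ₀ t)⁻¹ with hwdef
  have hxc : ContinuousOn x (Icc a b) := fun t ht =>
    (hxd t ht).continuousAt.continuousWithinAt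
  have hucont : ContinuousOn u (Icc a b) := hEcont.mul hxc
  have hvcont : ContinuousOn v (Icc a b) := hEcont.mul hxDc
  have hwcont : ContinuousOn w (Icc a b) := hκ₀.inv₀ hκ₀ne
  have hwpos : ∀ t ∈ Icc a b, 0 < w t := fun t ht => inv_pos.2 (hκ₀p t ht)
  have hu' : ∀ t ∈ Ioo a b, HasDerivAt u (v t * w t) t := by
    intro t ht
    have htm := Ioo_subset_Icc_self ht
    have hx' := (hxd t htm).hasDerivAt
    have hmul := (hE' t ht).mul hx'
    convert hmul using 1
    · rfl
    · rfl
    · rfl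
    have h0 := hκ₀ne t htm
    simp only [hvdef, hwdef, hXdef, Dconf, hrdef]
    field_simp
  have hv' : ∀ t ∈ Ioo a b, HasDerivAt v (-(q t * u t * w t)) t := by
    intro t ht
    have htm := Ioo_subset_Icc_self ht
    have hX' := (hxd2 t htm).hasDerivAt
    have hmul := (hE' t ht).mul hX'
    convert hmul using 1
    · rfl
    · rfl
    · rfl
    have h0 := hκ₀ne t htm
    have heq := hxeq t htm
    have heq' : κ₁ t * X t + κ₀ t * deriv X t + q t * x t = 0 := by
      rw [hXdef]
      exact heq
    simp only [hudef, hwdef, hrdef]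
    field_simp
    linear_combination (-(E t)) * heq'
  have hua : u a = 0 := by simp [hudef, hxa]
  have hub : u b = 0 := by simp [hudef, hxb]
  have hnt : ∃ t ∈ Icc a b, u t ≠ 0 := by
    obtain ⟨t, ht, hne⟩ := hxnontriv
    exact ⟨t, ht, mul_ne_zero (hEpos t).ne' hne⟩
  have hcore := lyap_core hab hwcont hwpos hqcc
    (fun t ht => (hq t (hIab ht)).le) hucont hvcont hu' hv' hua hub hnt
  -- final step
  have hWeq : (∫ t in a..b, 1 / κ₀ t) = ∫ t in a..b, w t := by
    simp only [one_div, hwdef]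
  have hWpos : 0 < ∫ t in a..b, w t :=
    intervalIntegral_pos_of_pos_on
      ((hwcont.mono (by rw [uIcc_of_le hab'])).intervalIntegrable)
      (fun t ht => hwpos t (Ioo_subset_Icc_self ht)) hab
  -- e0 monotone
  have hIr : IntegrableOn r (Icc a b) volume := hr.integrableOn_Icc
  have hEFcont : ContinuousOn (fun t => ∫ τ in t..b, r τ) (Icc a b) := by
    have := continuousOn_primitive_interval_left (μ := volume) (a := a) (b := b)
      (by rwa [uIcc_of_le hab'])
    exact this.mono (by rw [uIcc_of_le hab'])
  have hemono : ∀ t ∈ Icc a b, e0 κ₀ κ₁ b a ≤ e0 κ₀ κ₁ b t := by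
    intro t ht
    have hsplit : (∫ τ in a..t, r τ) + ∫ τ in t..b, r τ = ∫ τ in a..b, r τ :=
      integral_add_adjacent_intervals (hrint hamem ht) (hrint ht hbmem)
    have h1 : 0 ≤ ∫ τ in a..t, r τ :=
      integral_nonneg ht.1 fun τ hτ => hrnn τ ⟨hτ.1, hτ.2.trans ht.2⟩
    have : (∫ τ in t..b, r τ) ≤ ∫ τ in a..b, r τ := by linarith
    exact Real.exp_le_exp.2 (neg_le_neg this)
  have he0cont : ContinuousOn (fun t => e0 κ₀ κ₁ b t) (Icc a b) := by
    simp only [e0]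
    exact Real.continuous_exp.comp_continuousOn hEFcont.neg
  have he0pos : ∀ t, 0 < e0 κ₀ κ₁ b t := fun t => Real.exp_pos _
  have hmono : (∫ t in a..b, e0 κ₀ κ₁ b a * (q t * w t))
      ≤ ∫ t in a..b, q t * e0 κ₀ κ₁ b t / κ₀ t := by
    refine integral_mono_on hab' ?_ ?_ (fun t ht => ?_)
    · exact ((continuousOn_const.mul (hqcc.mul hwcont)).mono
        (by rw [uIcc_of_le hab'])).intervalIntegrable
    · exact (((hqcc.mul he0cont).div hκ₀ hκ₀ne).mono
        (by rw [uIcc_of_le hab'])).intervalIntegrable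
    · have h1 : q t * e0 κ₀ κ₁ b t / κ₀ t = q t * e0 κ₀ κ₁ b t * w t := by
        rw [hwdef, div_eq_mul_inv]
      rw [h1]
      have hqt := (hq t (hIab ht)).le
      have hwt := (hwpos t ht).le
      have := hemono t ht
      nlinarith [mul_nonneg hqt hwt]
  have hconst : (∫ t in a..b, e0 κ₀ κ₁ b a * (q t * w t))
      = e0 κ₀ κ₁ b a * ∫ t in a..b, q t * w t := integral_const_mul _ _
  rw [ge_iff_le, hWeq, div_le_iff₀ hWpos]
  have hfin : 4 * e0 κ₀ κ₁ b a ≤ (e0 κ₀ κ₁ b a * ∫ t in a..b, q t * w t) * ∫ t in a..b, w t := by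
    have h4 : 4 ≤ (∫ t in a..b, q t * w t) * ∫ t in a..b, w t := by
      rw [div_le_iff₀ hWpos] at hcore
      linarith
    have he := (he0pos a).le
    calc 4 * e0 κ₀ κ₁ b a = e0 κ₀ κ₁ b a * 4 := by ring
      _ ≤ e0 κ₀ κ₁ b a * ((∫ t in a..b, q t * w t) * ∫ t in a..b, w t) :=
          mul_le_mul_of_nonneg_left h4 (Real.exp_pos _).le
      _ = (e0 κ₀ κ₁ b a * ∫ t in a..b, q t * w t) * ∫ t in a..b, w t := by ring
  calc 4 * e0 κ₀ κ₁ b a ≤ (e0 κ₀ κ₁ b a * ∫ t in a..b, q t * w t) * ∫ t in a..b, w t := hfin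
    _ = (∫ t in a..b, e0 κ₀ κ₁ b a * (q t * w t)) * ∫ t in a..b, w t := by rw [hconst]
    _ ≤ (∫ t in a..b, q t * e0 κ₀ κ₁ b t / κ₀ t) * ∫ t in a..b, w t :=
        mul_le_mul_of_nonneg_right hmono hWpos.le
end
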